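/- arXiv:1601.00675 — 4 statements merged into one kernel-verified Lean document; each statement's English description precedes it below -/
import Mathlib

section
/- With the Sheffer-type Chlodowsky operators T_n* as above, T_n*(e_2; x) = x^2 + (b_n/n)·x·(A(1) + 2A'(1) + A(1)H''(1))/A(1) + (b_n/n)^2·(A'(1) + A''(1))/A(1) for all x ≥ 0, where e_2(t) = t^2. -/
open Real Filter Topology

lemma hasDerivAt_of_hasSum {R : ℝ} (c : ℕ → ℝ) (F : ℝ → ℝ)
    (hF : ∀ t : ℝ, |t| < R → HasSum (fun k : ℕ => c k * t ^ k) (F t))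
    (t : ℝ) (ht : |t| < R) :
    HasDerivAt F (∑' k : ℕ, (k : ℝ) * c k * t ^ (k - 1)) t ∧
      HasSum (fun k : ℕ => (k : ℝ) * c k * t ^ (k - 1)) (deriv F t) := by
  have hR0 : 0 < R := lt_of_le_of_lt (abs_nonneg t) ht
  set r : ℝ := (|t| + R) / 2 with hrdef
  set ρ : ℝ := (r + R) / 2 with hρdef
  have htr : |t| < r := by rw [hrdef]; linarith
  have hr0 : 0 < r := lt_of_le_of_lt (abs_nonneg t) htr
  have hrρ : r < ρ := by rw [hρdef, hrdef]; linarith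
  have hρ0 : 0 < ρ := hr0.trans hrρ
  have hρR : ρ < R := by rw [hρdef, hrdef]; linarith
  have hsumρ : Summable (fun k : ℕ => c k * ρ ^ k) :=
    (hF ρ (by rwa [abs_of_pos hρ0])).summable
  have htend : Filter.Tendsto (fun k : ℕ => |c k * ρ ^ k|) atTop (nhds 0) := by
    simpa using hsumρ.tendsto_atTop_zero.abs
  obtain ⟨M, hM⟩ := htend.bddAbove_range
  have hMb : ∀ k : ℕ, |c k| * ρ ^ k ≤ M := by
    intro k
    have := hM (Set.mem_range_self (f := fun k : ℕ => |c k * ρ ^ k|) k)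
    simpa [abs_mul, abs_of_pos hρ0, abs_pow] using this
  set q : ℝ := r / ρ with hqdef
  have hq0 : 0 < q := div_pos hr0 hρ0
  have hq1 : q < 1 := (div_lt_one hρ0).2 hrρ
  set u : ℕ → ℝ := fun k => M / ρ * ((k : ℝ) * q ^ (k - 1)) with hudef
  have hsumq : Summable (fun k : ℕ => (k : ℝ) * q ^ (k - 1)) := by
    have h1 : Summable (fun k : ℕ => (k : ℝ) * q ^ k) := by
      simpa [pow_one] using
        summable_pow_mul_geometric_of_norm_lt_one (R := ℝ) 1
          (r := q) (by rwa [Real.norm_eq_abs, abs_of_pos hq0])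
    have h2 := h1.mul_left (1 / q)
    refine h2.congr fun k => ?_
    cases k with
    | zero => simp
    | succ m =>
      have : q ^ m = (1 / q) * q ^ (m + 1) := by
        field_simp [pow_succ]
        ring
      simp [this]; ring
  have hsummu : Summable u := hsumq.mul_left _
  have hball : IsOpen (Metric.ball (0 : ℝ) r) := Metric.isOpen_ball
  have hconn : IsPreconnected (Metric.ball (0 : ℝ) r) :=
    (convex_ball (0 : ℝ) r).isPreconnected
  have hg : ∀ (k : ℕ) (z : ℝ), z ∈ Metric.ball (0 : ℝ) r →
      HasDerivAt (fun z : ℝ => c k * z ^ k) ((k : ℝ) * c k * z ^ (k - 1)) z := by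
    intro k z _
    have := (hasDerivAt_pow k z).const_mul (c k)
    refine this.congr_deriv ?_
    ring
  have hg' : ∀ (k : ℕ) (z : ℝ), z ∈ Metric.ball (0 : ℝ) r →
      ‖(k : ℝ) * c k * z ^ (k - 1)‖ ≤ u k := by
    intro k z hz
    rw [Metric.mem_ball, dist_zero_right, Real.norm_eq_abs] at hz
    cases k with
    | zero => simp [hudef]
    | succ m =>
      have hzr : |z| ≤ r := hz.le
      have h1 : ‖((m + 1 : ℕ) : ℝ) * c (m + 1) * z ^ m‖
          ≤ ((m : ℝ) + 1) * |c (m + 1)| * r ^ m := by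
        rw [Real.norm_eq_abs, abs_mul, abs_mul, abs_pow]
        have hc : |((m + 1 : ℕ) : ℝ)| = (m : ℝ) + 1 := by
          rw [abs_of_nonneg (by positivity)]; push_cast; ring
        rw [hc]
        gcongr
      have h2 : |c (m + 1)| * r ^ m ≤ M / ρ * q ^ m := by
        have hrq : r ^ m = ρ ^ m * q ^ m := by
          rw [hqdef, ← mul_pow]
          congr 1
          field_simp
        have h3 : |c (m + 1)| * ρ ^ (m + 1) ≤ M := hMb (m + 1)
        have h4 : |c (m + 1)| * ρ ^ m ≤ M / ρ := by
          rw [le_div_iff₀ hρ0]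
          calc |c (m + 1)| * ρ ^ m * ρ = |c (m + 1)| * ρ ^ (m + 1) := by ring
          _ ≤ M := h3
        calc |c (m + 1)| * r ^ m = |c (m + 1)| * ρ ^ m * q ^ m := by rw [hrq]; ring
        _ ≤ M / ρ * q ^ m := by
            have hqm : (0 : ℝ) ≤ q ^ m := by positivity
            exact mul_le_mul_of_nonneg_right h4 hqm
      calc ‖((m + 1 : ℕ) : ℝ) * c (m + 1) * z ^ m‖
          ≤ ((m : ℝ) + 1) * |c (m + 1)| * r ^ m := h1
        _ = ((m : ℝ) + 1) * (|c (m + 1)| * r ^ m) := by ring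
        _ ≤ ((m : ℝ) + 1) * (M / ρ * q ^ m) := by
            have : (0:ℝ) ≤ (m : ℝ) + 1 := by positivity
            exact mul_le_mul_of_nonneg_left h2 this
        _ = u (m + 1) := by simp [hudef]; push_cast; ring
  have h0mem : (0 : ℝ) ∈ Metric.ball (0 : ℝ) r := by simpa using hr0
  have htmem : t ∈ Metric.ball (0 : ℝ) r := by
    rwa [Metric.mem_ball, dist_zero_right, Real.norm_eq_abs]
  have hg0 : Summable (fun k : ℕ => c k * (0 : ℝ) ^ k) :=
    (hF 0 (by simpa using hR0)).summable
  have hmain := hasDerivAt_tsum_of_isPreconnected hsummu hball hconn hg hg' h0mem hg0 htmem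
  have heq : F =ᶠ[nhds t] fun z => ∑' k : ℕ, c k * z ^ k := by
    filter_upwards [hball.mem_nhds htmem] with z hz
    rw [Metric.mem_ball, dist_zero_right, Real.norm_eq_abs] at hz
    exact ((hF z (hz.trans (by rw [hrdef]; linarith))).tsum_eq).symm
  have hF' : HasDerivAt F (∑' k : ℕ, (k : ℝ) * c k * t ^ (k - 1)) t :=
    HasDerivAt.congr_of_eventuallyEq hmain heq
  refine ⟨hF', ?_⟩
  have hsum' : Summable (fun k : ℕ => (k : ℝ) * c k * t ^ (k - 1)) :=
    Summable.of_norm_bounded hsummu (fun k => hg' k t htmem)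
  rw [hF'.deriv]
  exact hsum'.hasSum

lemma hasSum_deriv_shift {R : ℝ} (c : ℕ → ℝ) (F : ℝ → ℝ)
    (hF : ∀ t : ℝ, |t| < R → HasSum (fun k : ℕ => c k * t ^ k) (F t))
    (t : ℝ) (ht : |t| < R) :
    HasSum (fun k : ℕ => (((k : ℝ) + 1) * c (k + 1)) * t ^ k) (deriv F t) := by
  have h := (hasDerivAt_of_hasSum c F hF t ht).2
  have h2 := (hasSum_nat_add_iff'
    (f := fun k : ℕ => (k : ℝ) * c k * t ^ (k - 1)) 1).mpr h
  simp only [Finset.range_one, Finset.sum_singleton, Nat.cast_zero, zero_mul, sub_zero] at h2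
  refine h2.congr fun k => ?_
  push_cast
  simp [Nat.add_sub_cancel]

lemma hasSum_shift_back_one {f : ℕ → ℝ} {m : ℝ} (h0 : f 0 = 0)
    (h : HasSum (fun k : ℕ => f (k + 1)) m) : HasSum f m := by
  have := (hasSum_nat_add_iff (f := f) 1).1 h
  simpa [h0] using this

lemma hasSum_shift_back_two {f : ℕ → ℝ} {m : ℝ} (h0 : f 0 = 0) (h1 : f 1 = 0)
    (h : HasSum (fun k : ℕ => f (k + 2)) m) : HasSum f m := by
  have := (hasSum_nat_add_iff (f := f) 2).1 h
  simpa [Finset.sum_range_succ, h0, h1] using this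

/-- The Chlodowsky-type generalized Szász operator built from Sheffer polynomials `p`. -/
noncomputable def szaszSheffer (A H : ℝ → ℝ) (p : ℕ → ℝ → ℝ) (b : ℕ → ℝ)
    (n : ℕ) (f : ℝ → ℝ) (x : ℝ) : ℝ :=
  (Real.exp (-((n : ℝ) / b n) * x * H 1) / A 1) *
    ∑' k : ℕ, p k (((n : ℝ) / b n) * x) * f (((k : ℝ) / n) * b n)

theorem sheffer_e2
    (R : ℝ) (hR : 1 < R)
    (A H : ℝ → ℝ) (a h : ℕ → ℝ)
    (ha0 : a 0 ≠ 0) (hh1 : h 1 ≠ 0) (hh0 : h 0 = 0)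
    (hAser : ∀ t : ℝ, |t| < R → HasSum (fun k : ℕ => a k * t ^ k) (A t))
    (hHser : ∀ t : ℝ, |t| < R → HasSum (fun k : ℕ => h k * t ^ k) (H t))
    (p : ℕ → ℝ → ℝ)
    (hgen : ∀ x t : ℝ, |t| < R →
      HasSum (fun k : ℕ => p k x * t ^ k) (A t * Real.exp (x * H t)))
    (hp : ∀ (k : ℕ) (x : ℝ), 0 ≤ x → 0 ≤ p k x)
    (hA1 : A 1 ≠ 0) (hH1 : deriv H 1 = 1)
    (b : ℕ → ℝ) (hbpos : ∀ n, 0 < b n)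
    (hbtop : Tendsto b atTop atTop)
    (hbn : Tendsto (fun n : ℕ => b n / (n : ℝ)) atTop (nhds 0))
    (n : ℕ) (hn : 1 ≤ n) (x : ℝ) (hx : 0 ≤ x) :
    szaszSheffer A H p b n (fun t => t ^ 2) x
      = x ^ 2 + (b n / n) * x * ((A 1 + 2 * deriv A 1 + A 1 * deriv (deriv H) 1) / A 1)
        + (b n / n) ^ 2 * ((deriv A 1 + deriv (deriv A) 1) / A 1) := by
  have hbne : b n ≠ 0 := (hbpos n).ne'
  have hnne : (n : ℝ) ≠ 0 := Nat.cast_ne_zero.2 (by omega)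
  have h1R : |(1 : ℝ)| < R := by rw [abs_one]; exact hR
  set y : ℝ := (n : ℝ) / b n * x with hy
  set g : ℝ → ℝ := fun t => A t * Real.exp (y * H t) with hgdef
  have hq : ∀ t : ℝ, |t| < R → HasSum (fun k : ℕ => p k y * t ^ k) (g t) :=
    fun t ht => hgen y t ht
  have hAdiff : ∀ t : ℝ, |t| < R → HasDerivAt A (deriv A t) t := fun t ht =>
    ((hasDerivAt_of_hasSum a A hAser t ht).1.differentiableAt).hasDerivAt
  have hHdiff : ∀ t : ℝ, |t| < R → HasDerivAt H (deriv H t) t := fun t ht =>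
    ((hasDerivAt_of_hasSum h H hHser t ht).1.differentiableAt).hasDerivAt
  have hA'sum : ∀ t : ℝ, |t| < R →
      HasSum (fun k : ℕ => (((k : ℝ) + 1) * a (k + 1)) * t ^ k) (deriv A t) :=
    fun t ht => hasSum_deriv_shift a A hAser t ht
  have hH'sum : ∀ t : ℝ, |t| < R →
      HasSum (fun k : ℕ => (((k : ℝ) + 1) * h (k + 1)) * t ^ k) (deriv H t) :=
    fun t ht => hasSum_deriv_shift h H hHser t ht
  have hA2 : HasDerivAt (deriv A) (deriv (deriv A) 1) 1 :=
    ((hasDerivAt_of_hasSum _ (deriv A) hA'sum 1 h1R).1.differentiableAt).hasDerivAt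
  have hH2 : HasDerivAt (deriv H) (deriv (deriv H) 1) 1 :=
    ((hasDerivAt_of_hasSum _ (deriv H) hH'sum 1 h1R).1.differentiableAt).hasDerivAt
  have hgD : ∀ t : ℝ, |t| < R → HasDerivAt g
      (deriv A t * Real.exp (y * H t) + A t * (Real.exp (y * H t) * (y * deriv H t))) t := by
    intro t ht
    exact (hAdiff t ht).mul (((hHdiff t ht).const_mul y).exp)
  set D : ℝ → ℝ := fun t =>
    deriv A t * Real.exp (y * H t) + A t * (Real.exp (y * H t) * (y * deriv H t)) with hDdef
  have hgD' : ∀ t : ℝ, |t| < R → deriv g t = D t := fun t ht => (hgD t ht).deriv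
  have hDg : deriv g =ᶠ[nhds 1] D := by
    have hmem : Metric.ball (0 : ℝ) R ∈ nhds (1 : ℝ) :=
      Metric.isOpen_ball.mem_nhds (by
        rw [Metric.mem_ball, dist_zero_right, Real.norm_eq_abs]; exact h1R)
    filter_upwards [hmem] with z hz
    rw [Metric.mem_ball, dist_zero_right, Real.norm_eq_abs] at hz
    exact hgD' z hz
  set E : ℝ := Real.exp (y * H 1) with hE
  have hEne : E ≠ 0 := Real.exp_ne_zero _
  have hexp1 : HasDerivAt (fun t : ℝ => Real.exp (y * H t)) (E * (y * deriv H 1)) 1 :=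
    ((hHdiff 1 h1R).const_mul y).exp
  have hD1 : HasDerivAt D
      ((deriv (deriv A) 1 * E + deriv A 1 * (E * (y * deriv H 1)))
        + (deriv A 1 * (E * (y * deriv H 1))
          + A 1 * ((E * (y * deriv H 1)) * (y * deriv H 1) + E * (y * deriv (deriv H) 1)))) 1 := by
    have t1 := hA2.mul hexp1
    have t2 := (hAdiff 1 h1R).mul (hexp1.mul (hH2.const_mul y))
    exact t1.add t2
  have hg2 : deriv (deriv g) 1
      = (deriv (deriv A) 1 * E + deriv A 1 * (E * (y * deriv H 1)))
        + (deriv A 1 * (E * (y * deriv H 1))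
          + A 1 * ((E * (y * deriv H 1)) * (y * deriv H 1) + E * (y * deriv (deriv H) 1))) := by
    rw [Filter.EventuallyEq.deriv_eq hDg]
    exact hD1.deriv
  have hg1 : deriv g 1 = deriv A 1 * E + A 1 * (E * (y * deriv H 1)) := hgD' 1 h1R
  have Sg1 : HasSum (fun k : ℕ => (k : ℝ) * p k y) (deriv g 1) := by
    refine hasSum_shift_back_one (by simp) ?_
    have hs := hasSum_deriv_shift (fun k => p k y) g hq 1 h1R
    have hfun : (fun k : ℕ => (((k : ℝ) + 1) * p (k + 1) y) * (1 : ℝ) ^ k)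
        = fun k : ℕ => ((k + 1 : ℕ) : ℝ) * p (k + 1) y := funext fun k => by push_cast; ring
    rwa [hfun] at hs
  have Sg2 : HasSum (fun k : ℕ => (k : ℝ) * ((k : ℝ) - 1) * p k y) (deriv (deriv g) 1) := by
    refine hasSum_shift_back_two (by simp) (by simp) ?_
    have hs := hasSum_deriv_shift (fun k : ℕ => ((k : ℝ) + 1) * p (k + 1) y) (deriv g)
      (fun t ht => hasSum_deriv_shift (fun k => p k y) g hq t ht) 1 h1R
    refine hs.congr fun s => Finset.sum_congr rfl fun k _ => ?_
    simp only [one_pow, mul_one]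
    rw [show k + 1 + 1 = k + 2 from rfl]
    push_cast
    ring
  have Ssq : HasSum (fun k : ℕ => p k y * (((k : ℝ) / n) * b n) ^ 2)
      ((b n / n) ^ 2 * (deriv (deriv g) 1 + deriv g 1)) := by
    have hsum := (Sg2.add Sg1).mul_left ((b n / n) ^ 2)
    have hfun : (fun k : ℕ =>
          (b n / n) ^ 2 * ((k : ℝ) * ((k : ℝ) - 1) * p k y + (k : ℝ) * p k y))
        = fun k : ℕ => p k y * (((k : ℝ) / n) * b n) ^ 2 := funext fun k => by ring
    rwa [hfun] at hsum
  have hexpneg : Real.exp (-((n : ℝ) / b n) * x * H 1) = E⁻¹ := by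
    rw [hE, ← Real.exp_neg]
    congr 1
    rw [hy]; ring
  simp only [szaszSheffer]
  rw [hexpneg, ← hy, Ssq.tsum_eq, hg2, hg1, hH1, hy]
  field_simp
  ring
end

section
/- With T_n* as above and assuming A'(1) = 0 (so that T_n*(e_1;x) = x), the second central moment satisfies T_n*((e_1 − x)^2; x) = (b_n/n)(1 + H''(1))x + (b_n/n)^2·(A'(1) + A''(1))/A(1). -/
open Real Filter Topology

open Filter in

lemma myOnBall (c : ℕ → ℝ) (f : ℝ → ℝ) (R : ℝ) (hR : 0 < R)
    (h : ∀ t : ℝ, |t| < R → HasSum (fun k : ℕ => c k * t ^ k) (f t)) :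
    HasFPowerSeriesOnBall f (FormalMultilinearSeries.ofScalars ℝ c) 0 (ENNReal.ofReal R) := by
  constructor
  · apply ENNReal.le_of_forall_nnreal_lt
    intro r hr
    replace hr : (r : ℝ) < R := by
      have := ENNReal.toReal_lt_of_lt_ofReal hr
      simpa using this
    have h0 : (0:ℝ) ≤ r := r.coe_nonneg
    set r' : ℝ := ((r : ℝ) + R) / 2 with hr'def
    have h0' : (0:ℝ) ≤ r' := by rw [hr'def]; linarith
    have hrr' : (r:ℝ) < r' := by rw [hr'def]; linarith
    have hr'R : |r'| < R := by rw [abs_of_nonneg h0', hr'def]; linarith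
    have hsum := (h r' hr'R).summable
    set s : NNReal := ⟨r', h0'⟩ with hs
    have htend : Tendsto (fun n : ℕ => ‖(FormalMultilinearSeries.ofScalars ℝ c) n‖ * (s:ℝ) ^ n)
        atTop (nhds 0) := by
      have h2 : Tendsto (fun n : ℕ => |c n * r' ^ n|) atTop (nhds 0) := by
        simpa using hsum.tendsto_atTop_zero.abs
      refine h2.congr fun n => ?_
      rw [FormalMultilinearSeries.ofScalars_norm, abs_mul, Real.norm_eq_abs]
      rw [abs_of_nonneg (pow_nonneg h0' n)]
      rfl
    have h3 : (s : ENNReal) ≤ (FormalMultilinearSeries.ofScalars ℝ c).radius :=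
      FormalMultilinearSeries.le_radius_of_tendsto _ htend
    refine le_trans ?_ h3
    have : r ≤ s := by rw [← NNReal.coe_le_coe]; exact hrr'.le
    exact_mod_cast this
  · exact ENNReal.ofReal_pos.mpr hR
  · intro y hy
    rw [EMetric.mem_ball, edist_zero_right] at hy
    have hy' : |y| < R := by
      have := ENNReal.toReal_lt_of_lt_ofReal hy
      simpa [Real.norm_eq_abs] using this
    have hh := h y hy'
    simp only [zero_add]
    refine HasSum.congr_fun hh fun n => ?_
    rw [FormalMultilinearSeries.ofScalars_apply_eq]
    simp [mul_comm]

open Filter in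
lemma myDeriv (c : ℕ → ℝ) (f : ℝ → ℝ) (R : ℝ) (hR : 0 < R)
    (h : ∀ t : ℝ, |t| < R → HasSum (fun k : ℕ => c k * t ^ k) (f t))
    (t : ℝ) (ht : |t| < R) :
    HasSum (fun k : ℕ => ((k:ℝ)+1) * c (k+1) * t ^ k) (deriv f t) := by
  have hps := (myOnBall c f R hR h).fderiv
  have hmem : (‖t‖₊ : ENNReal) < ENNReal.ofReal R := by
    rw [ENNReal.lt_ofReal_iff_toReal_lt (by simp)]
    simpa [Real.norm_eq_abs] using ht
  have hsum := hps.hasSum (y := t) (by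
    rw [EMetric.mem_ball, edist_zero_right, ENNReal.lt_ofReal_iff_toReal_lt (by simp)]
    simpa [Real.norm_eq_abs] using ht)
  rw [zero_add] at hsum
  have hsum1 := hsum.mapL (ContinuousLinearMap.apply ℝ ℝ (1:ℝ))
  have hterm : ∀ n : ℕ,
      (FormalMultilinearSeries.ofScalars ℝ c).derivSeries n (fun _ => t) 1
        = ((n:ℝ)+1) * c (n+1) * t ^ n := by
    intro n
    rcases eq_or_ne t 0 with rfl | htne
    · cases n with
      | zero =>
        have : (fun _ : Fin 0 => (0:ℝ)) = (fun _ => (1:ℝ)) := funext (fun i => i.elim0)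
        rw [this]
        have := (FormalMultilinearSeries.ofScalars ℝ c).derivSeries_apply_diag 0 (1:ℝ)
        rw [this, FormalMultilinearSeries.ofScalars_apply_eq]
        simp
      | succ m =>
        have hz : (fun _ : Fin (m+1) => (0:ℝ)) = 0 := rfl
        rw [hz, ContinuousMultilinearMap.map_zero]
        simp
    · have hL : ∀ (L : ℝ →L[ℝ] ℝ), L t = t * L 1 := by
        intro L
        conv_lhs => rw [show t = t • (1:ℝ) by simp, map_smul]
        simp [smul_eq_mul]
      have hdiag := (FormalMultilinearSeries.ofScalars ℝ c).derivSeries_apply_diag n t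
      rw [hL] at hdiag
      rw [FormalMultilinearSeries.ofScalars_apply_eq] at hdiag
      have : t * ((FormalMultilinearSeries.ofScalars ℝ c).derivSeries n (fun _ => t) 1)
          = t * (((n:ℝ)+1) * c (n+1) * t ^ n) := by
        rw [hdiag]
        simp only [nsmul_eq_mul, smul_eq_mul, pow_succ]
        push_cast
        ring
      exact mul_left_cancel₀ htne this
  have heq : (fun n : ℕ => (FormalMultilinearSeries.ofScalars ℝ c).derivSeries n (fun _ => t) 1)
      = fun n : ℕ => ((n:ℝ)+1) * c (n+1) * t ^ n := funext hterm
  simp only [ContinuousLinearMap.apply_apply] at hsum1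
  rw [heq] at hsum1
  rwa [fderiv_apply_one_eq_deriv] at hsum1

open Filter in
lemma myDiff (c : ℕ → ℝ) (f : ℝ → ℝ) (R : ℝ) (hR : 0 < R)
    (h : ∀ t : ℝ, |t| < R → HasSum (fun k : ℕ => c k * t ^ k) (f t))
    (t : ℝ) (ht : |t| < R) : DifferentiableAt ℝ f t := by
  have := (myOnBall c f R hR h).analyticAt_of_mem (y := t) ?_
  · exact this.differentiableAt
  · rw [EMetric.mem_ball, edist_zero_right]
    rw [ENNReal.lt_ofReal_iff_toReal_lt (by simp)]
    simpa [Real.norm_eq_abs] using ht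

theorem sheffer_second_central_moment
    (R : ℝ) (hR : 1 < R)
    (A H : ℝ → ℝ) (a h : ℕ → ℝ)
    (ha0 : a 0 ≠ 0) (hh1 : h 1 ≠ 0) (hh0 : h 0 = 0)
    (hAser : ∀ t : ℝ, |t| < R → HasSum (fun k : ℕ => a k * t ^ k) (A t))
    (hHser : ∀ t : ℝ, |t| < R → HasSum (fun k : ℕ => h k * t ^ k) (H t))
    (p : ℕ → ℝ → ℝ)
    (hgen : ∀ x t : ℝ, |t| < R →
      HasSum (fun k : ℕ => p k x * t ^ k) (A t * Real.exp (x * H t)))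
    (hp : ∀ (k : ℕ) (x : ℝ), 0 ≤ x → 0 ≤ p k x)
    (hA1 : A 1 ≠ 0) (hH1 : deriv H 1 = 1)
    (b : ℕ → ℝ) (hbpos : ∀ n, 0 < b n)
    (hbtop : Tendsto b atTop atTop)
    (hbn : Tendsto (fun n : ℕ => b n / (n : ℝ)) atTop (nhds 0))
    (hA'0 : deriv A 1 = 0)
    (n : ℕ) (hn : 1 ≤ n) (x : ℝ) (hx : 0 ≤ x) :
    szaszSheffer A H p b n (fun t => (t - x) ^ 2) x
      = (b n / n) * (1 + deriv (deriv H) 1) * x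
        + (b n / n) ^ 2 * ((deriv A 1 + deriv (deriv A) 1) / A 1) := by
  have hR0 : (0:ℝ) < R := lt_trans one_pos hR
  have h1R : |(1:ℝ)| < R := by rw [abs_one]; exact hR
  have hnR : (0:ℝ) < (n:ℝ) := by exact_mod_cast Nat.lt_of_lt_of_le Nat.zero_lt_one hn
  have hbR : (0:ℝ) < b n := hbpos n
  set u : ℝ := ((n:ℝ) / b n) * x with hu_def
  set q : ℕ → ℝ := fun k => p k u with hq_def
  set G : ℝ → ℝ := fun t => A t * Real.exp (u * H t) with hG_def
  have hG : ∀ t : ℝ, |t| < R → HasSum (fun k : ℕ => q k * t ^ k) (G t) :=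
    fun t ht => hgen u t ht
  -- series for derivatives of G
  have hG' : ∀ t : ℝ, |t| < R →
      HasSum (fun k : ℕ => ((k:ℝ)+1) * q (k+1) * t ^ k) (deriv G t) :=
    fun t ht => myDeriv q G R hR0 hG t ht
  have hG'' : HasSum (fun k : ℕ => ((k:ℝ)+1) * ((((k:ℕ)+1:ℕ):ℝ)+1) * q (k+2) * 1 ^ k)
      (deriv (deriv G) 1) := by
    have := myDeriv (fun k => ((k:ℝ)+1) * q (k+1)) (deriv G) R hR0 hG' 1 h1R
    refine this.congr_fun fun k => ?_
    push_cast
    ring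
  -- differentiability of A, H and their derivatives
  have hAdiff : ∀ t : ℝ, |t| < R → DifferentiableAt ℝ A t := myDiff a A R hR0 hAser
  have hHdiff : ∀ t : ℝ, |t| < R → DifferentiableAt ℝ H t := myDiff h H R hR0 hHser
  have hA'diff : DifferentiableAt ℝ (deriv A) 1 :=
    myDiff (fun k => ((k:ℝ)+1) * a (k+1)) (deriv A) R hR0 (myDeriv a A R hR0 hAser) 1 h1R
  have hH'diff : DifferentiableAt ℝ (deriv H) 1 :=
    myDiff (fun k => ((k:ℝ)+1) * h (k+1)) (deriv H) R hR0 (myDeriv h H R hR0 hHser) 1 h1R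
  -- derivative of exp(u * H t)
  have hE : ∀ t : ℝ, |t| < R → HasDerivAt (fun s => Real.exp (u * H s))
      (Real.exp (u * H t) * (u * deriv H t)) t :=
    fun t ht => (((hHdiff t ht).hasDerivAt).const_mul u).exp
  have hGd : ∀ t : ℝ, |t| < R → HasDerivAt G
      (deriv A t * Real.exp (u * H t) + A t * (Real.exp (u * H t) * (u * deriv H t))) t :=
    fun t ht => ((hAdiff t ht).hasDerivAt).mul (hE t ht)
  have hball : ∀ᶠ t in nhds (1:ℝ), |t| < R := by
    have : Set.Ioo (-R) R ∈ nhds (1:ℝ) :=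
      Ioo_mem_nhds (by linarith) hR
    filter_upwards [this] with t ht
    rw [abs_lt]; exact ⟨ht.1, ht.2⟩
  have hGderiv_ev : deriv G =ᶠ[nhds 1] fun t =>
      deriv A t * Real.exp (u * H t) + A t * (Real.exp (u * H t) * (u * deriv H t)) := by
    filter_upwards [hball] with t ht
    exact (hGd t ht).deriv
  -- second derivative of G at 1
  have hw : HasDerivAt (fun t => Real.exp (u * H t) * (u * deriv H t))
      (Real.exp (u * H 1) * (u * deriv H 1) * (u * deriv H 1)
        + Real.exp (u * H 1) * (u * deriv (deriv H) 1)) 1 :=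
    (hE 1 h1R).mul ((hH'diff.hasDerivAt).const_mul u)
  have hPhi : HasDerivAt (fun t =>
      deriv A t * Real.exp (u * H t) + A t * (Real.exp (u * H t) * (u * deriv H t)))
      ((deriv (deriv A) 1 * Real.exp (u * H 1)
          + deriv A 1 * (Real.exp (u * H 1) * (u * deriv H 1)))
        + (deriv A 1 * (Real.exp (u * H 1) * (u * deriv H 1))
          + A 1 * (Real.exp (u * H 1) * (u * deriv H 1) * (u * deriv H 1)
            + Real.exp (u * H 1) * (u * deriv (deriv H) 1)))) 1 :=
    ((hA'diff.hasDerivAt).mul (hE 1 h1R)).add (((hAdiff 1 h1R).hasDerivAt).mul hw)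
  have hG''val : deriv (deriv G) 1
      = (deriv (deriv A) 1 * Real.exp (u * H 1)
          + deriv A 1 * (Real.exp (u * H 1) * u))
        + (deriv A 1 * (Real.exp (u * H 1) * u)
          + A 1 * (Real.exp (u * H 1) * u * u
            + Real.exp (u * H 1) * (u * deriv (deriv H) 1))) := by
    rw [hGderiv_ev.deriv_eq, hPhi.deriv, hH1]
    ring
  have hG'val : deriv G 1
      = deriv A 1 * Real.exp (u * H 1) + A 1 * (Real.exp (u * H 1) * u) := by
    rw [(hGd 1 h1R).deriv, hH1]
    ring
  -- the three sums at t = 1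
  have hS0 : HasSum q (A 1 * Real.exp (u * H 1)) := by
    have := hG 1 h1R
    simpa using this
  have hS1 : HasSum (fun k : ℕ => ((k:ℝ)+1) * q (k+1)) (deriv G 1) := by
    have := hG' 1 h1R
    simpa using this
  have hS2 : HasSum (fun k : ℕ => ((k:ℝ)+1) * ((k:ℝ)+2) * q (k+2)) (deriv (deriv G) 1) := by
    refine hG''.congr_fun fun k => ?_
    push_cast
    ring
  -- shifted sums
  have hT1 : HasSum (fun k : ℕ => (k:ℝ) * q k) (deriv G 1) := by
    have hL : HasSum (fun m : ℕ => (((m+1:ℕ)):ℝ) * q (m+1)) (deriv G 1) :=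
      hS1.congr_fun fun m => by push_cast; ring
    have := (hasSum_nat_add_iff (f := fun k : ℕ => (k:ℝ) * q k) 1).mp hL
    simpa using this
  have hT2 : HasSum (fun k : ℕ => (k:ℝ) * ((k:ℝ) - 1) * q k) (deriv (deriv G) 1) := by
    have hL : HasSum (fun m : ℕ => (((m+2:ℕ)):ℝ) * ((((m+2:ℕ)):ℝ) - 1) * q (m+2))
        (deriv (deriv G) 1) := hS2.congr_fun fun m => by push_cast; ring
    have := (hasSum_nat_add_iff (f := fun k : ℕ => (k:ℝ) * ((k:ℝ) - 1) * q k) 2).mp hL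
    have hz : ∑ k ∈ Finset.range 2, ((k:ℝ) * ((k:ℝ) - 1) * q k) = 0 := by
      simp [Finset.sum_range_succ]
    rw [hz, add_zero] at this
    exact this
  have hK2 : HasSum (fun k : ℕ => (k:ℝ)^2 * q k) (deriv (deriv G) 1 + deriv G 1) :=
    (hT2.add hT1).congr_fun fun k => by ring
  have hx_eq : x = u * (b n / n) := by rw [hu_def]; field_simp
  have hfinal : HasSum (fun k : ℕ => q k * (((k:ℝ)/n) * b n - x)^2)
      ((b n / n)^2 * ((deriv (deriv G) 1 + deriv G 1) - 2*u*(deriv G 1)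
        + u^2*(A 1 * Real.exp (u * H 1)))) := by
    have hcomb := ((hK2.sub (hT1.mul_left (2*u))).add (hS0.mul_left (u^2))).mul_left
      ((b n / n)^2)
    refine hcomb.congr_fun fun k => ?_
    have hk : ((k:ℝ)/n) * b n - x = (b n / n) * ((k:ℝ) - u) := by
      rw [hx_eq]; field_simp
    rw [hk]; ring
  have hEne : Real.exp (u * H 1) ≠ 0 := (Real.exp_pos _).ne'
  have hexp : Real.exp (-((n:ℝ) / b n) * x * H 1) = (Real.exp (u * H 1))⁻¹ := by
    rw [← Real.exp_neg]; congr 1; rw [hu_def]; ring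
  simp only [szaszSheffer]
  rw [hfinal.tsum_eq, hexp, hG''val, hG'val, hx_eq]
  field_simp
  ring
end

section
/- With T_n* as above (assuming A'(1) = 0 so T_n*((e_1−x)^2;x) = (b_n/n)(1+H''(1))x + (b_n/n)^2(A'(1)+A''(1))/A(1)), for every f uniformly continuous and bounded on [0,∞) and every x ∈ [0,a]: |T_n*(f;x) − f(x)| ≤ (1 + √((1+H''(1))a + (b_n/n)(A'(1)+A''(1))/A(1)))·ω(f, √(b_n/n)). -/
open Real Filter Topology

/-- The modulus of continuity of `f` on `[0,∞)`. -/
noncomputable def modulus (f : ℝ → ℝ) (δ : ℝ) : ℝ :=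
  sSup {y | ∃ s t : ℝ, 0 ≤ s ∧ 0 ≤ t ∧ |s - t| ≤ δ ∧ y = |f s - f t|}

lemma ps_deriv (R : ℝ) (hR : 1 < R) (c : ℕ → ℝ) (g : ℝ → ℝ)
    (hc : ∀ t : ℝ, |t| < R → HasSum (fun k => c k * t ^ k) (g t))
    (t : ℝ) (ht : |t| < (1 + R) / 2) :
    HasSum (fun k : ℕ => ((k : ℝ) + 1) * c (k + 1) * t ^ k) (deriv g t) ∧
      HasDerivAt g (deriv g t) t := by
  set r : ℝ := (1 + R) / 2 with hr
  set r2 : ℝ := (r + R) / 2 with hr2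
  have hr1 : 1 < r := by rw [hr]; linarith
  have hrR : r < r2 := by rw [hr2]; linarith
  have hr2R : r2 < R := by rw [hr2]; linarith
  have hrpos : 0 < r := by linarith
  have hr2pos : 0 < r2 := by linarith
  have hq : 0 < r / r2 := by positivity
  have hq1 : r / r2 < 1 := (div_lt_one hr2pos).2 hrR
  -- bound on coefficients
  have hsum2 : Summable fun k => c k * r2 ^ k :=
    (hc r2 (by rw [abs_of_pos hr2pos]; exact hr2R)).summable
  have hsum2' : Summable fun k => |c k * r2 ^ k| := hsum2.abs
  set M : ℝ := ∑' k, |c k * r2 ^ k| with hM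
  have hMb : ∀ k, |c k| * r2 ^ k ≤ M := by
    intro k
    have := hsum2'.le_tsum k (fun j _ => abs_nonneg _)
    rwa [abs_mul, abs_of_pos (pow_pos hr2pos k)] at this
  have hM0 : 0 ≤ M := tsum_nonneg fun k => abs_nonneg _
  -- summable bound on derivatives
  set u : ℕ → ℝ := fun k => M / r * ((k : ℝ) * (r / r2) ^ k) with hu
  have hus : Summable u := by
    have := summable_pow_mul_geometric_of_norm_lt_one (R := ℝ) 1
      (r := r / r2) (by rw [Real.norm_eq_abs, abs_of_pos hq]; exact hq1)
    simpa [hu, pow_one] using this.mul_left (M / r)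
  -- derivative of each term
  have hterm : ∀ (k : ℕ) (y : ℝ), HasDerivAt (fun z => c k * z ^ k)
      ((k : ℝ) * c k * y ^ (k - 1)) y := by
    intro k y
    simpa [mul_comm, mul_assoc, mul_left_comm] using (hasDerivAt_pow k y).const_mul (c k)
  have hbound : ∀ (k : ℕ) (y : ℝ), y ∈ Metric.ball (0 : ℝ) r →
      ‖(k : ℝ) * c k * y ^ (k - 1)‖ ≤ u k := by
    intro k y hy
    rw [Metric.mem_ball, dist_zero_right, Real.norm_eq_abs] at hy
    rw [Real.norm_eq_abs]
    cases k with
    | zero => simp [hu]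
    | succ m =>
      have h1 : |((m : ℝ) + 1) * c (m + 1) * y ^ m| =
          ((m : ℝ) + 1) * |c (m + 1)| * |y| ^ m := by
        rw [abs_mul, abs_mul, abs_pow, abs_of_nonneg (by positivity : (0:ℝ) ≤ (m:ℝ)+1)]
      push_cast
      rw [h1]
      have hym : |y| ^ m ≤ r ^ m := pow_le_pow_left₀ (abs_nonneg _) hy.le m
      have hcb : |c (m + 1)| * r2 ^ (m + 1) ≤ M := hMb (m + 1)
      have hcbd : |c (m + 1)| ≤ M / r2 ^ (m + 1) := (le_div_iff₀ (by positivity)).2 hcb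
      have e : u (m + 1) = ((m : ℝ) + 1) * (M / r2 ^ (m + 1)) * r ^ m := by
        simp only [hu]
        push_cast
        rw [div_pow]
        field_simp
        ring
      rw [e]
      exact mul_le_mul (mul_le_mul_of_nonneg_left hcbd (by positivity)) hym
        (by positivity) (by positivity)
  have hball : t ∈ Metric.ball (0 : ℝ) r := by
    rw [Metric.mem_ball, dist_zero_right, Real.norm_eq_abs]; exact ht
  have h0ball : (0 : ℝ) ∈ Metric.ball (0 : ℝ) r := by
    simpa using hrpos
  have hg0 : Summable fun k => c k * (0 : ℝ) ^ k :=
    (hc 0 (by simpa using by linarith : |(0:ℝ)| < R)).summable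
  have hD : HasDerivAt (fun z => ∑' k, c k * z ^ k)
      (∑' k : ℕ, (k : ℝ) * c k * t ^ (k - 1)) t :=
    hasDerivAt_tsum_of_isPreconnected hus Metric.isOpen_ball
      (convex_ball _ _).isPreconnected (fun k y _ => hterm k y) hbound h0ball hg0 hball
  -- g agrees with tsum near t
  have hev : g =ᶠ[𝓝 t] fun z => ∑' k, c k * z ^ k := by
    have : Metric.ball (0 : ℝ) R ∈ 𝓝 t := by
      refine Metric.isOpen_ball.mem_nhds ?_
      rw [Metric.mem_ball, dist_zero_right, Real.norm_eq_abs]; linarith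
    filter_upwards [this] with z hz
    rw [Metric.mem_ball, dist_zero_right, Real.norm_eq_abs] at hz
    exact ((hc z hz).tsum_eq).symm
  have hDg : HasDerivAt g (∑' k : ℕ, (k : ℝ) * c k * t ^ (k - 1)) t :=
    hD.congr_of_eventuallyEq hev
  have hsumd : Summable fun k : ℕ => (k : ℝ) * c k * t ^ (k - 1) :=
    Summable.of_norm_bounded hus fun k => hbound k t hball
  have hHS : HasSum (fun k : ℕ => (k : ℝ) * c k * t ^ (k - 1)) (deriv g t) := by
    rw [hDg.deriv]; exact hsumd.hasSum
  refine ⟨?_, by rwa [hDg.deriv]⟩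
  -- shift the index
  have := (hasSum_nat_add_iff' (f := fun k : ℕ => (k : ℝ) * c k * t ^ (k - 1)) 1).2 hHS
  simp only [Finset.range_one, Finset.sum_singleton, Nat.cast_zero, zero_mul,
    sub_zero] at this
  convert this using 2 with k
  · rfl
  rw [Nat.add_sub_cancel]; push_cast
  try ring

lemma modulus_spec (f : ℝ → ℝ) (M : ℝ) (hM : ∀ t, |f t| ≤ M) {s t δ : ℝ}
    (hs : 0 ≤ s) (ht : 0 ≤ t) (hd : |s - t| ≤ δ) : |f s - f t| ≤ modulus f δ := by
  apply le_csSup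
  · refine ⟨2 * M, ?_⟩
    rintro y ⟨s', t', _, _, _, rfl⟩
    calc |f s' - f t'| ≤ |f s'| + |f t'| := abs_sub _ _
      _ ≤ 2 * M := by have := hM s'; have := hM t'; linarith
  · exact ⟨s, t, hs, ht, hd, rfl⟩

lemma modulus_nonneg (f : ℝ → ℝ) (M : ℝ) (hM : ∀ t, |f t| ≤ M) {δ : ℝ} (hδ : 0 ≤ δ) :
    0 ≤ modulus f δ := by
  have := modulus_spec f M hM (s := 0) (t := 0) (δ := δ) le_rfl le_rfl (by simpa using hδ)
  simpa using this

lemma modulus_nat (f : ℝ → ℝ) (M : ℝ) (hM : ∀ t, |f t| ≤ M) {δ : ℝ} (hδ : 0 ≤ δ)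
    (m : ℕ) : ∀ s t : ℝ, 0 ≤ s → 0 ≤ t → |s - t| ≤ m * δ →
    |f s - f t| ≤ m * modulus f δ := by
  induction m with
  | zero =>
    intro s t hs ht hd
    simp only [Nat.cast_zero, zero_mul] at hd ⊢
    have : s = t := by
      have := abs_nonneg (s - t)
      have h0 : |s - t| = 0 := le_antisymm hd this
      have := abs_eq_zero.1 h0; linarith
    simp [this]
  | succ m ih =>
    intro s t hs ht hd
    set v : ℝ := ((m : ℝ) * s + t) / ((m : ℝ) + 1) with hv
    have hm1 : (0 : ℝ) < (m : ℝ) + 1 := by positivity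
    have hv0 : 0 ≤ v := by positivity
    have hsv : s - v = (s - t) / ((m : ℝ) + 1) := by
      rw [hv]; field_simp; ring
    have hvt : v - t = (m : ℝ) * (s - t) / ((m : ℝ) + 1) := by
      rw [hv]; field_simp; ring
    have h1 : |s - v| ≤ δ := by
      rw [hsv, abs_div, abs_of_pos hm1, div_le_iff₀ hm1]
      push_cast at hd; linarith
    have h2 : |v - t| ≤ (m : ℝ) * δ := by
      rw [hvt, abs_div, abs_of_pos hm1, div_le_iff₀ hm1, abs_mul,
        abs_of_nonneg (by positivity : (0:ℝ) ≤ (m:ℝ))]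
      push_cast at hd
      nlinarith [abs_nonneg (s - t), Nat.cast_nonneg (α := ℝ) m]
    calc |f s - f t| ≤ |f s - f v| + |f v - f t| := abs_sub_le _ _ _
      _ ≤ modulus f δ + (m : ℝ) * modulus f δ :=
        add_le_add (modulus_spec f M hM hs hv0 h1) (ih v t hv0 ht h2)
      _ = ((m : ℕ) + 1 : ℝ) * modulus f δ := by push_cast; ring
      _ = ((m + 1 : ℕ) : ℝ) * modulus f δ := by push_cast; ring

lemma modulus_est (f : ℝ → ℝ) (M : ℝ) (hM : ∀ t, |f t| ≤ M) {δ : ℝ} (hδ : 0 < δ)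
    (s t : ℝ) (hs : 0 ≤ s) (ht : 0 ≤ t) :
    |f s - f t| ≤ (1 + |s - t| / δ) * modulus f δ := by
  set m : ℕ := ⌈|s - t| / δ⌉₊ with hm
  have h1 : |s - t| ≤ (m : ℝ) * δ := by
    rw [← div_le_iff₀ hδ]; exact Nat.le_ceil _
  have h2 : (m : ℝ) ≤ 1 + |s - t| / δ := by
    have := Nat.ceil_lt_add_one (by positivity : (0:ℝ) ≤ |s - t| / δ)
    rw [hm]; linarith
  calc |f s - f t| ≤ (m : ℝ) * modulus f δ := modulus_nat f M hM hδ.le m s t hs ht h1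
    _ ≤ (1 + |s - t| / δ) * modulus f δ :=
      mul_le_mul_of_nonneg_right h2 (modulus_nonneg f M hM hδ.le)

lemma tsum_cs (w d : ℕ → ℝ) (hw : ∀ k, 0 ≤ w k) (S : ℝ) (hW : HasSum w 1)
    (hS : HasSum (fun k => w k * d k ^ 2) S) :
    ∑' k, w k * |d k| ≤ Real.sqrt S := by
  have hS0 : 0 ≤ S := hasSum_le (fun k => mul_nonneg (hw k) (sq_nonneg _)) hasSum_zero hS
  have habs : ∀ k, w k * |d k| ≤ w k + w k * d k ^ 2 := by
    intro k
    have h1 : |d k| ≤ 1 + d k ^ 2 := by nlinarith [sq_nonneg (|d k| - 1), sq_abs (d k)]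
    nlinarith [hw k]
  have hsum : Summable fun k => w k * |d k| :=
    Summable.of_nonneg_of_le (fun k => mul_nonneg (hw k) (abs_nonneg _)) habs
      (hW.summable.add hS.summable)
  apply hsum.tsum_le_of_sum_le
  intro F
  have key := Real.sum_mul_le_sqrt_mul_sqrt F (fun k => Real.sqrt (w k))
      (fun k => Real.sqrt (w k) * |d k|)
  have e1 : ∀ k, Real.sqrt (w k) * (Real.sqrt (w k) * |d k|) = w k * |d k| := by
    intro k; rw [← mul_assoc, Real.mul_self_sqrt (hw k)]
  have e2 : ∀ k, Real.sqrt (w k) ^ 2 = w k := fun k => Real.sq_sqrt (hw k)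
  have e3 : ∀ k, (Real.sqrt (w k) * |d k|) ^ 2 = w k * d k ^ 2 := by
    intro k; rw [mul_pow, Real.sq_sqrt (hw k), sq_abs]
  simp only [e1, e2, e3] at key
  refine key.trans ?_
  have b1 : ∑ k ∈ F, w k ≤ 1 := sum_le_hasSum F (fun k _ => hw k) hW
  have b2 : ∑ k ∈ F, w k * d k ^ 2 ≤ S :=
    sum_le_hasSum F (fun k _ => mul_nonneg (hw k) (sq_nonneg _)) hS
  calc Real.sqrt (∑ k ∈ F, w k) * Real.sqrt (∑ k ∈ F, w k * d k ^ 2)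
      ≤ Real.sqrt 1 * Real.sqrt S :=
        mul_le_mul (Real.sqrt_le_sqrt b1) (Real.sqrt_le_sqrt b2)
          (Real.sqrt_nonneg _) (Real.sqrt_nonneg _)
    _ = Real.sqrt S := by rw [Real.sqrt_one, one_mul]

lemma central_moment (R : ℝ) (hR : 1 < R) (A H : ℝ → ℝ) (p : ℕ → ℝ → ℝ)
    (hgen : ∀ x t : ℝ, |t| < R → HasSum (fun k : ℕ => p k x * t ^ k) (A t * Real.exp (x * H t)))
    (hA1 : A 1 ≠ 0) (hH1 : deriv H 1 = 1) (hA'0 : deriv A 1 = 0)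
    (hAd : ∀ t : ℝ, |t| < (1 + R) / 2 → HasDerivAt A (deriv A t) t)
    (hHd : ∀ t : ℝ, |t| < (1 + R) / 2 → HasDerivAt H (deriv H t) t)
    (hAd2 : HasDerivAt (deriv A) (deriv (deriv A) 1) 1)
    (hHd2 : HasDerivAt (deriv H) (deriv (deriv H) 1) 1)
    (u β : ℝ) (hβ : 0 < β) :
    HasSum (fun k : ℕ => Real.exp (-(u * H 1)) / A 1 * p k u * ((k : ℝ) * β - β * u) ^ 2)
      ((1 + deriv (deriv H) 1) * β * (β * u) + β ^ 2 * (deriv (deriv A) 1 / A 1)) := by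
  set r : ℝ := (1 + R) / 2 with hrdef
  have hr1 : 1 < r := by rw [hrdef]; linarith
  have h1r : |(1 : ℝ)| < r := by rw [abs_one]; exact hr1
  have h1R : |(1 : ℝ)| < R := by rw [abs_one]; exact hR
  have h1r' : |(1 : ℝ)| < (1 + r) / 2 := by rw [abs_one]; linarith
  set G : ℝ → ℝ := fun t => A t * Real.exp (u * H t) with hGdef
  have hG : ∀ t : ℝ, |t| < R → HasSum (fun k : ℕ => p k u * t ^ k) (G t) :=
    fun t ht => hgen u t ht
  have ps1 := ps_deriv R hR (fun k => p k u) G hG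
  have ps2 := ps_deriv r hr1 (fun k : ℕ => ((k : ℝ) + 1) * p (k + 1) u) (deriv G)
    (fun t ht => (ps1 t ht).1) 1 h1r'
  set E : ℝ → ℝ := fun t => Real.exp (u * H t) with hEdef
  have hE : ∀ t : ℝ, |t| < r → HasDerivAt E (E t * (u * deriv H t)) t :=
    fun t ht => ((hHd t ht).const_mul u).exp
  have hDG : ∀ t : ℝ, |t| < r →
      HasDerivAt G (deriv A t * E t + A t * (E t * (u * deriv H t))) t :=
    fun t ht => (hAd t ht).mul (hE t ht)
  have hDGeq : ∀ t : ℝ, |t| < r →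
      deriv G t = deriv A t * E t + A t * (E t * (u * deriv H t)) :=
    fun t ht => (hDG t ht).deriv
  have hG1 : deriv G 1 = A 1 * E 1 * u := by
    rw [hDGeq 1 h1r, hA'0, hH1]; ring
  -- second derivative
  have hDev : deriv G =ᶠ[𝓝 1] fun t => deriv A t * E t + A t * (E t * (u * deriv H t)) := by
    have hmem : Metric.ball (0 : ℝ) r ∈ 𝓝 (1 : ℝ) := by
      refine Metric.isOpen_ball.mem_nhds ?_
      rw [Metric.mem_ball, dist_zero_right, Real.norm_eq_abs]; exact h1r
    filter_upwards [hmem] with t htm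
    rw [Metric.mem_ball, dist_zero_right, Real.norm_eq_abs] at htm
    exact hDGeq t htm
  have hDD : HasDerivAt (fun t => deriv A t * E t + A t * (E t * (u * deriv H t)))
      ((deriv (deriv A) 1 * E 1 + deriv A 1 * (E 1 * (u * deriv H 1))) +
        (deriv A 1 * (E 1 * (u * deriv H 1)) +
          A 1 * ((E 1 * (u * deriv H 1)) * (u * deriv H 1) +
            E 1 * (u * deriv (deriv H) 1)))) 1 :=
    (hAd2.mul (hE 1 h1r)).add ((hAd 1 h1r).mul ((hE 1 h1r).mul (hHd2.const_mul u)))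
  have hG2 : deriv (deriv G) 1 =
      E 1 * (deriv (deriv A) 1 + A 1 * u ^ 2 + A 1 * u * deriv (deriv H) 1) := by
    rw [hDev.deriv_eq, hDD.deriv, hA'0, hH1]; ring
  -- sums at t = 1
  have hS0 : HasSum (fun k : ℕ => p k u) (A 1 * E 1) := by
    have := hG 1 h1R
    simpa [hGdef, hEdef] using this
  have hS1 : HasSum (fun k : ℕ => (k : ℝ) * p k u) (deriv G 1) := by
    have h' := (ps1 1 h1r).1
    simp only [one_pow, mul_one] at h'
    have h'' : HasSum (fun k : ℕ => (fun m : ℕ => (m : ℝ) * p m u) (k + 1)) (deriv G 1) := by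
      convert h' using 2 with k; push_cast; ring
    have := (hasSum_nat_add_iff (f := fun m : ℕ => (m : ℝ) * p m u) 1).1 h''
    simpa using this
  have hS2 : HasSum (fun k : ℕ => (k : ℝ) * ((k : ℝ) - 1) * p k u) (deriv (deriv G) 1) := by
    have h' := ps2.1
    simp only [one_pow, mul_one] at h'
    have h'' : HasSum (fun k : ℕ => (fun m : ℕ => (m : ℝ) * ((m : ℝ) - 1) * p m u) (k + 2))
        (deriv (deriv G) 1) := by
      convert h' using 2 with k; push_cast; ring
    have := (hasSum_nat_add_iff (f := fun m : ℕ => (m : ℝ) * ((m : ℝ) - 1) * p m u) 2).1 h''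
    simpa [Finset.sum_range_succ] using this
  have hSsq : HasSum (fun k : ℕ => (k : ℝ) ^ 2 * p k u) (deriv (deriv G) 1 + deriv G 1) := by
    have heq : (fun k : ℕ => (k : ℝ) ^ 2 * p k u) =
        fun k : ℕ => (k : ℝ) * ((k : ℝ) - 1) * p k u + (k : ℝ) * p k u := by
      funext k; ring
    rw [heq]; exact hS2.add hS1
  have central := ((hSsq.mul_left (β ^ 2)).sub (hS1.mul_left (2 * β * (β * u)))).add
    (hS0.mul_left ((β * u) ^ 2))
  have final := central.mul_left (Real.exp (-(u * H 1)) / A 1)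
  have hfun : (fun k : ℕ => Real.exp (-(u * H 1)) / A 1 * p k u * ((k : ℝ) * β - β * u) ^ 2) =
      fun k : ℕ => Real.exp (-(u * H 1)) / A 1 *
        ((β ^ 2 * ((k : ℝ) ^ 2 * p k u) - 2 * β * (β * u) * ((k : ℝ) * p k u)) +
          (β * u) ^ 2 * p k u) := by
    funext k; ring
  have hE1 : Real.exp (-(u * H 1)) = (E 1)⁻¹ := by
    rw [hEdef]; exact Real.exp_neg _
  have hEne : E 1 ≠ 0 := by rw [hEdef]; exact (Real.exp_pos _).ne'
  have hval : Real.exp (-(u * H 1)) / A 1 *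
      ((β ^ 2 * (deriv (deriv G) 1 + deriv G 1) - 2 * β * (β * u) * deriv G 1) +
        (β * u) ^ 2 * (A 1 * E 1)) =
      (1 + deriv (deriv H) 1) * β * (β * u) + β ^ 2 * (deriv (deriv A) 1 / A 1) := by
    rw [hG1, hG2, hE1]
    field_simp
    ring
  rw [hfun, ← hval]
  exact final

theorem sheffer_modulus_estimate
    (R : ℝ) (hR : 1 < R)
    (A H : ℝ → ℝ) (a h : ℕ → ℝ)
    (ha0 : a 0 ≠ 0) (hh1 : h 1 ≠ 0) (hh0 : h 0 = 0)
    (hAser : ∀ t : ℝ, |t| < R → HasSum (fun k : ℕ => a k * t ^ k) (A t))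
    (hHser : ∀ t : ℝ, |t| < R → HasSum (fun k : ℕ => h k * t ^ k) (H t))
    (p : ℕ → ℝ → ℝ)
    (hgen : ∀ x t : ℝ, |t| < R →
      HasSum (fun k : ℕ => p k x * t ^ k) (A t * Real.exp (x * H t)))
    (hp : ∀ (k : ℕ) (x : ℝ), 0 ≤ x → 0 ≤ p k x)
    (hA1 : A 1 ≠ 0) (hH1 : deriv H 1 = 1)
    (b : ℕ → ℝ) (hbpos : ∀ n, 0 < b n)
    (hbtop : Tendsto b atTop atTop)
    (hbn : Tendsto (fun n : ℕ => b n / (n : ℝ)) atTop (nhds 0))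
    (hA'0 : deriv A 1 = 0)
    (f : ℝ → ℝ) (hfc : UniformContinuous f) (hfb : ∃ M, ∀ t : ℝ, |f t| ≤ M)
    (c : ℝ) (hc : 0 < c)
    (n : ℕ) (hn : 1 ≤ n) (x : ℝ) (hx : x ∈ Set.Icc (0 : ℝ) c) :
    |szaszSheffer A H p b n f x - f x|
      ≤ (1 + Real.sqrt ((1 + deriv (deriv H) 1) * c
            + (b n / n) * ((deriv A 1 + deriv (deriv A) 1) / A 1)))
          * modulus f (Real.sqrt (b n / n)) := by
  obtain ⟨M0, hM0⟩ := hfb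
  have hnR : (0 : ℝ) < n := by exact_mod_cast hn
  have hbn0 : b n ≠ 0 := (hbpos n).ne'
  set β : ℝ := b n / (n : ℝ) with hβdef
  have hβ : 0 < β := div_pos (hbpos n) hnR
  set δ : ℝ := Real.sqrt β with hδdef
  have hδ : 0 < δ := Real.sqrt_pos.2 hβ
  clear_value δ
  have h1R : |(1 : ℝ)| < R := by rw [abs_one]; exact hR
  -- A 1 > 0
  have hS00 : HasSum (fun k : ℕ => p k 0) (A 1) := by
    simpa using hgen 0 1 h1R
  have hA1pos : 0 < A 1 :=
    lt_of_le_of_ne (hasSum_le (fun k => hp k 0 le_rfl) hasSum_zero hS00) (Ne.symm hA1)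
  set r : ℝ := (1 + R) / 2 with hrdef
  have hr1 : 1 < r := by rw [hrdef]; linarith
  have h1r' : |(1 : ℝ)| < (1 + r) / 2 := by rw [abs_one]; linarith
  -- differentiability of A and H
  have hAps := ps_deriv R hR a A hAser
  have hAd : ∀ t : ℝ, |t| < r → HasDerivAt A (deriv A t) t := fun t ht => (hAps t ht).2
  have hAd2 : HasDerivAt (deriv A) (deriv (deriv A) 1) 1 :=
    (ps_deriv r hr1 (fun k : ℕ => ((k : ℝ) + 1) * a (k + 1)) (deriv A)
      (fun t ht => (hAps t ht).1) 1 h1r').2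
  have hHps := ps_deriv R hR h H hHser
  have hHd : ∀ t : ℝ, |t| < r → HasDerivAt H (deriv H t) t := fun t ht => (hHps t ht).2
  have hHd2 : HasDerivAt (deriv H) (deriv (deriv H) 1) 1 :=
    (ps_deriv r hr1 (fun k : ℕ => ((k : ℝ) + 1) * h (k + 1)) (deriv H)
      (fun t ht => (hHps t ht).1) 1 h1r').2
  have key : ∀ u' : ℝ,
      HasSum (fun k : ℕ => Real.exp (-(u' * H 1)) / A 1 * p k u' * ((k : ℝ) * β - β * u') ^ 2)
        ((1 + deriv (deriv H) 1) * β * (β * u') + β ^ 2 * (deriv (deriv A) 1 / A 1)) :=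
    fun u' => central_moment R hR A H p hgen hA1 hH1 hA'0 hAd hHd hAd2 hHd2 u' β hβ
  have keynonneg : ∀ u' : ℝ, 0 ≤ u' →
      0 ≤ (1 + deriv (deriv H) 1) * β * (β * u') + β ^ 2 * (deriv (deriv A) 1 / A 1) := by
    intro u' hu'
    refine hasSum_le (fun k => ?_) hasSum_zero (key u')
    have h1 : 0 ≤ Real.exp (-(u' * H 1)) / A 1 := le_of_lt (by positivity)
    exact mul_nonneg (mul_nonneg h1 (hp k u' hu')) (sq_nonneg _)
  set K : ℝ := deriv (deriv A) 1 / A 1 with hKdef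
  set H2 : ℝ := deriv (deriv H) 1 with hH2def
  clear_value K H2
  have hK0 : 0 ≤ K := by
    have := keynonneg 0 le_rfl
    simp only [mul_zero, zero_add] at this
    by_contra hK
    push_neg at hK
    nlinarith [mul_pos (pow_pos hβ 2) (neg_pos.2 hK)]
  have hH20 : 0 ≤ 1 + H2 := by
    by_contra hneg
    push_neg at hneg
    have hd : 0 < -(1 + H2) * β ^ 2 := mul_pos (neg_pos.2 hneg) (pow_pos hβ 2)
    set u0 : ℝ := (β ^ 2 * K + 1) / (-(1 + H2) * β ^ 2) with hu0def
    have hu0 : 0 ≤ u0 := by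
      apply div_nonneg _ hd.le
      nlinarith
    have := keynonneg u0 hu0
    rw [hu0def] at this
    have heval : (1 + H2) * β * (β * ((β ^ 2 * K + 1) / (-(1 + H2) * β ^ 2)))
        + β ^ 2 * K = -1 := by
      have hQ : ((β ^ 2 * K + 1) / (-(1 + H2) * β ^ 2)) * (-(1 + H2) * β ^ 2) =
          β ^ 2 * K + 1 := div_mul_cancel₀ _ hd.ne'
      linear_combination -hQ
    rw [heval] at this
    linarith
  -- now work at x
  set u : ℝ := (n : ℝ) / b n * x with hudef
  have hu0 : 0 ≤ u := by
    rw [hudef]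
    exact mul_nonneg (div_nonneg hnR.le (hbpos n).le) hx.1
  have hβu : β * u = x := by
    rw [hβdef, hudef]
    field_simp
  set fac : ℝ := Real.exp (-(u * H 1)) / A 1 with hfacdef
  have hfac0 : 0 < fac := by rw [hfacdef]; positivity
  set w : ℕ → ℝ := fun k => fac * p k u with hwdef
  have hw0 : ∀ k, 0 ≤ w k := by
    intro k; rw [hwdef]; exact mul_nonneg hfac0.le (hp k u hu0)
  set d : ℕ → ℝ := fun k => (k : ℝ) * β - x with hddef
  clear_value u fac w d
  -- sums
  have hE1 : Real.exp (-(u * H 1)) * Real.exp (u * H 1) = 1 := by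
    rw [← Real.exp_add]; simp
  have hPsum : HasSum (fun k : ℕ => p k u) (A 1 * Real.exp (u * H 1)) := by
    simpa using hgen u 1 h1R
  have hW : HasSum w 1 := by
    rw [hwdef]
    have := hPsum.mul_left fac
    have hval : fac * (A 1 * Real.exp (u * H 1)) = 1 := by
      rw [hfacdef]
      calc Real.exp (-(u * H 1)) / A 1 * (A 1 * Real.exp (u * H 1)) =
          Real.exp (-(u * H 1)) * Real.exp (u * H 1) * (A 1 / A 1) := by ring
        _ = 1 := by rw [hE1, div_self hA1, mul_one]
    rwa [hval] at this
  have hV : HasSum (fun k : ℕ => w k * d k ^ 2)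
      ((1 + H2) * β * x + β ^ 2 * K) := by
    have hk := key u
    rw [hβu] at hk
    have heq : (fun k : ℕ => w k * d k ^ 2) =
        fun k : ℕ => Real.exp (-(u * H 1)) / A 1 * p k u * ((k : ℝ) * β - x) ^ 2 := by
      funext k; rw [hwdef, hddef, hfacdef]
    rw [heq]
    exact hk
  have hV0 : 0 ≤ (1 + H2) * β * x + β ^ 2 * K :=
    hasSum_le (fun k => mul_nonneg (hw0 k) (sq_nonneg _)) hasSum_zero hV
  -- f-sums
  have hyk : ∀ k : ℕ, (k : ℝ) / n * b n = (k : ℝ) * β := by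
    intro k; rw [hβdef]; ring
  have hPfs : Summable (fun k : ℕ => p k u * f ((k : ℝ) / n * b n)) := by
    apply Summable.of_norm_bounded (hPsum.summable.mul_right M0)
    intro k
    rw [Real.norm_eq_abs, abs_mul, abs_of_nonneg (hp k u hu0)]
    exact mul_le_mul_of_nonneg_left (hM0 _) (hp k u hu0)
  set Sf : ℝ := ∑' k : ℕ, p k u * f ((k : ℝ) / n * b n) with hSfdef
  have hF : HasSum (fun k : ℕ => p k u * f ((k : ℝ) / n * b n)) Sf := hPfs.hasSum
  have hszasz : szaszSheffer A H p b n f x = fac * Sf := by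
    have harg : -((n : ℝ) / b n) * x * H 1 = -((n : ℝ) / b n * x * H 1) := by ring
    simp only [szaszSheffer]
    rw [harg, hfacdef, hSfdef, hudef]
  have hFw : HasSum (fun k : ℕ => fac * (p k u * f ((k : ℝ) / n * b n))) (fac * Sf) :=
    hF.mul_left fac
  have hfx : HasSum (fun k : ℕ => w k * f x) (1 * f x) := HasSum.mul_right (f x) hW
  have hdiff : HasSum (fun k : ℕ => w k * (f ((k : ℝ) * β) - f x)) (fac * Sf - 1 * f x) := by
    have heq : (fun k : ℕ => w k * (f ((k : ℝ) * β) - f x)) =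
        fun k : ℕ => fac * (p k u * f ((k : ℝ) / n * b n)) - w k * f x := by
      funext k; simp only [hwdef]; rw [hyk k]; ring
    rw [heq]
    exact hFw.sub hfx
  -- summability of auxiliary series
  have hwd_sum : Summable (fun k : ℕ => w k * |d k|) := by
    apply Summable.of_nonneg_of_le (fun k => mul_nonneg (hw0 k) (abs_nonneg _))
      (fun k => ?_) (hW.summable.add hV.summable)
    have h1 : |d k| ≤ 1 + d k ^ 2 := by nlinarith [sq_nonneg (|d k| - 1), sq_abs (d k)]
    calc w k * |d k| ≤ w k * (1 + d k ^ 2) := mul_le_mul_of_nonneg_left h1 (hw0 k)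
      _ = w k + w k * d k ^ 2 := by ring
  set ω : ℝ := modulus f δ with hωdef
  have hω0 : 0 ≤ ω := modulus_nonneg f M0 hM0 hδ.le
  -- main bound
  have habs_sum : Summable (fun k : ℕ => |w k * (f ((k : ℝ) * β) - f x)|) := by
    apply Summable.of_nonneg_of_le (fun k => abs_nonneg _) (fun k => ?_)
      (hW.summable.mul_right (2 * M0))
    rw [abs_mul, abs_of_nonneg (hw0 k)]
    have : |f ((k : ℝ) * β) - f x| ≤ 2 * M0 := by
      calc |f ((k : ℝ) * β) - f x| ≤ |f ((k : ℝ) * β)| + |f x| := abs_sub _ _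
        _ ≤ 2 * M0 := by have := hM0 ((k : ℝ) * β); have := hM0 x; linarith
    exact mul_le_mul_of_nonneg_left this (hw0 k)
  have hRHSsum : Summable (fun k : ℕ => ω * w k + ω / δ * (w k * |d k|)) :=
    ((hW.summable.mul_left ω).add (hwd_sum.mul_left (ω / δ)))
  have step1 : |szaszSheffer A H p b n f x - f x| ≤
      ∑' k : ℕ, |w k * (f ((k : ℝ) * β) - f x)| := by
    rw [hszasz, show fac * Sf - f x = fac * Sf - 1 * f x by ring, ← hdiff.tsum_eq]
    calc |∑' k : ℕ, w k * (f ((k : ℝ) * β) - f x)| =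
        ‖∑' k : ℕ, w k * (f ((k : ℝ) * β) - f x)‖ := (Real.norm_eq_abs _).symm
      _ ≤ ∑' k : ℕ, ‖w k * (f ((k : ℝ) * β) - f x)‖ :=
          norm_tsum_le_tsum_norm (by simp only [Real.norm_eq_abs]; exact habs_sum)
      _ = ∑' k : ℕ, |w k * (f ((k : ℝ) * β) - f x)| := by
          simp only [Real.norm_eq_abs]
  have step2 : ∑' k : ℕ, |w k * (f ((k : ℝ) * β) - f x)| ≤
      ∑' k : ℕ, (ω * w k + ω / δ * (w k * |d k|)) := by
    apply Summable.tsum_le_tsum _ habs_sum hRHSsum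
    intro k
    rw [abs_mul, abs_of_nonneg (hw0 k)]
    have hest := modulus_est f M0 hM0 hδ ((k : ℝ) * β) x
      (mul_nonneg (Nat.cast_nonneg k) hβ.le) hx.1
    calc w k * |f ((k : ℝ) * β) - f x| ≤ w k * ((1 + |(k : ℝ) * β - x| / δ) * ω) :=
          mul_le_mul_of_nonneg_left hest (hw0 k)
      _ = ω * w k + ω / δ * (w k * |d k|) := by rw [hddef]; ring
  have step3 : ∑' k : ℕ, (ω * w k + ω / δ * (w k * |d k|)) =
      ω + ω / δ * ∑' k : ℕ, w k * |d k| := by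
    rw [Summable.tsum_add (hW.summable.mul_left ω) (hwd_sum.mul_left (ω / δ)),
      tsum_mul_left, tsum_mul_left, hW.tsum_eq, mul_one]
  have hCS : ∑' k : ℕ, w k * |d k| ≤ Real.sqrt ((1 + H2) * β * x + β ^ 2 * K) :=
    tsum_cs w d hw0 _ hW hV
  have step4 : |szaszSheffer A H p b n f x - f x| ≤
      ω + ω / δ * Real.sqrt ((1 + H2) * β * x + β ^ 2 * K) := by
    refine (step1.trans (step2.trans (le_of_eq step3))).trans ?_
    have h5 : 0 ≤ ω / δ := div_nonneg hω0 hδ.le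
    have h6 := mul_le_mul_of_nonneg_left hCS h5
    linarith
  -- simplify the sqrt term
  have hsq : Real.sqrt ((1 + H2) * β * x + β ^ 2 * K) / δ =
      Real.sqrt ((1 + H2) * x + β * K) := by
    rw [hδdef, ← Real.sqrt_div hV0]
    congr 1
    field_simp
  have hinner : (1 + H2) * x + β * K ≤ (1 + H2) * c + β * ((deriv A 1 + deriv (deriv A) 1) / A 1) := by
    have h1 : (1 + H2) * x ≤ (1 + H2) * c := mul_le_mul_of_nonneg_left hx.2 hH20
    have h2 : β * K = β * ((deriv A 1 + deriv (deriv A) 1) / A 1) := by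
      rw [hKdef, hA'0, zero_add]
    linarith
  have hfinal : ω / δ * Real.sqrt ((1 + H2) * β * x + β ^ 2 * K) ≤
      ω * Real.sqrt ((1 + H2) * c + β * ((deriv A 1 + deriv (deriv A) 1) / A 1)) := by
    rw [div_mul_eq_mul_div, mul_div_assoc, hsq]
    exact mul_le_mul_of_nonneg_left (Real.sqrt_le_sqrt hinner) hω0
  calc |szaszSheffer A H p b n f x - f x|
      ≤ ω + ω / δ * Real.sqrt ((1 + H2) * β * x + β ^ 2 * K) := step4
    _ ≤ ω + ω * Real.sqrt ((1 + H2) * c + β * ((deriv A 1 + deriv (deriv A) 1) / A 1)) := by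
        linarith
    _ = (1 + Real.sqrt ((1 + H2) * c
          + β * ((deriv A 1 + deriv (deriv A) 1) / A 1))) * ω := by ring
end

section
/- Let f be bounded and uniformly continuous on [0,∞). Then |T_n*(f;x) − f(x)| ≤ 2K(f, δ_n(x)) where K(f,δ) = inf{‖f−g‖_∞ + δ‖g‖_{C_B^2} : g ∈ C_B^2[0,∞)} is Peetre's K-functional and δ_n(x) = (1/4)T_n*((t−x)^2;x), under the assumption A'(1) = 0. -/
open Real Filter Topology

/-- Sup norm on `[0,∞)`. -/
noncomputable def supnorm (f : ℝ → ℝ) : ℝ := sSup {y | ∃ x : ℝ, 0 ≤ x ∧ y = |f x|}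

/-- Peetre's K-functional. -/
noncomputable def peetreK (f : ℝ → ℝ) (δ : ℝ) : ℝ :=
  sInf {y | ∃ g : ℝ → ℝ, ContDiff ℝ 2 g ∧ (∃ M, ∀ t : ℝ, |g t| ≤ M)
    ∧ (∃ M, ∀ t : ℝ, |deriv g t| ≤ M) ∧ (∃ M, ∀ t : ℝ, |deriv (deriv g) t| ≤ M)
    ∧ y = supnorm (fun t => f t - g t)
        + δ * (supnorm g + supnorm (deriv g) + supnorm (deriv (deriv g)))}

lemma summable_weight {c : ℕ → ℝ} {r r' S : ℝ} (h0 : 0 ≤ r) (hrr' : r < r')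
    (h : HasSum (fun k : ℕ => c k * r' ^ k) S) (m : ℕ) :
    Summable (fun k : ℕ => (k : ℝ) ^ m * |c k| * r ^ k) := by
  have hr' : 0 < r' := lt_of_le_of_lt h0 hrr'
  have habs : Summable (fun k : ℕ => |c k| * r' ^ k) := by
    have := h.summable.abs
    simpa [abs_mul, abs_of_pos (pow_pos hr' _)] using this
  obtain ⟨C, hC⟩ : BddAbove (Set.range fun k : ℕ => |c k| * r' ^ k) := by
    have h0' : Tendsto (fun k : ℕ => |c k| * r' ^ k) atTop (nhds 0) := habs.tendsto_atTop_zero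
    exact h0'.bddAbove_range
  have hgeo : Summable (fun k : ℕ => C * ((k : ℝ) ^ m * (r / r') ^ k)) := by
    apply Summable.mul_left
    apply summable_pow_mul_geometric_of_norm_lt_one
    rw [Real.norm_eq_abs, abs_of_nonneg (div_nonneg h0 hr'.le)]
    exact (div_lt_one hr').2 hrr'
  apply Summable.of_nonneg_of_le (fun k : ℕ => by positivity) _ hgeo
  intro k
  have h1 : |c k| * r' ^ k ≤ C := hC (Set.mem_range_self k)
  have h2 : (0:ℝ) < r' ^ k := pow_pos hr' _
  have : (k:ℝ) ^ m * |c k| * r ^ k = ((k:ℝ) ^ m * (r/r')^k) * (|c k| * r' ^ k) := by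
    rw [div_pow]; field_simp
  rw [this]
  calc ((k:ℝ) ^ m * (r/r')^k) * (|c k| * r' ^ k) ≤ ((k:ℝ) ^ m * (r/r')^k) * C := by
        apply mul_le_mul_of_nonneg_left h1 (by positivity)
    _ = C * ((k:ℝ) ^ m * (r/r')^k) := by ring

lemma hasDerivAt_of_series {R : ℝ} (hR : 1 < R) {c : ℕ → ℝ} {F : ℝ → ℝ}
    (h : ∀ t : ℝ, |t| < R → HasSum (fun k : ℕ => c k * t ^ k) (F t)) :
    Summable (fun k : ℕ => (k : ℝ) * c k) ∧ HasDerivAt F (∑' k : ℕ, (k : ℝ) * c k) 1 := by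
  set r : ℝ := (1 + R) / 2 with hrdef
  have hr1 : 1 < r := by simp [hrdef]; linarith
  have hrR : r < R := by simp [hrdef]; linarith
  set r' : ℝ := (r + R) / 2 with hr'def
  have hrr' : r < r' := by simp [hr'def]; linarith
  have hr'R : r' < R := by simp [hr'def]; linarith
  have hr0 : (0:ℝ) ≤ r := by linarith
  have hSr' : HasSum (fun k : ℕ => c k * r' ^ k) (F r') :=
    h r' (by rw [abs_of_nonneg (by linarith)]; exact hr'R)
  have hu : Summable (fun k : ℕ => (k : ℝ) ^ 1 * |c k| * r ^ k) := summable_weight hr0 hrr' hSr' 1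
  set u : ℕ → ℝ := fun k : ℕ => (k : ℝ) ^ 1 * |c k| * r ^ k with hudef
  have hsummable : Summable (fun k : ℕ => (k : ℝ) * c k) := by
    apply Summable.of_norm_bounded hu
    intro k
    have : ‖(k:ℝ) * c k‖ = (k:ℝ) * |c k| := by
      rw [Real.norm_eq_abs, abs_mul, abs_of_nonneg (Nat.cast_nonneg k)]
    rw [this, hudef]
    have h1 : (1:ℝ) ≤ r ^ k := one_le_pow₀ hr1.le
    simp only [pow_one]
    nlinarith [mul_nonneg (Nat.cast_nonneg (α := ℝ) k) (abs_nonneg (c k)), h1]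
  constructor
  · exact hsummable
  have hmem : (1:ℝ) ∈ Set.Ioo (-r) r := ⟨by linarith, hr1⟩
  have key : HasDerivAt (fun t : ℝ => ∑' k : ℕ, c k * t ^ k)
      (∑' k : ℕ, c k * ((k : ℝ) * 1 ^ (k - 1))) 1 := by
    apply hasDerivAt_tsum_of_isPreconnected hu isOpen_Ioo (convex_Ioo _ _).isPreconnected
      (fun k t _ => (hasDerivAt_pow k t).const_mul (c k)) _ hmem _ hmem
    · intro k t ht
      obtain ⟨ht1, ht2⟩ := ht
      have habs : |t| < r := abs_lt.2 ⟨ht1, ht2⟩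
      simp only [Real.norm_eq_abs, abs_mul, abs_pow, Nat.abs_cast]
      have h1 : |t| ^ (k-1) ≤ r ^ (k-1) := pow_le_pow_left₀ (abs_nonneg t) habs.le _
      have h2 : r ^ (k-1) ≤ r ^ k := pow_le_pow_right₀ hr1.le (Nat.sub_le k 1)
      have h3 : |t| ^ (k-1) ≤ r ^ k := h1.trans h2
      rw [hudef]
      simp only [pow_one]
      have h4 : (k:ℝ) * |t| ^ (k-1) ≤ (k:ℝ) * r ^ k :=
        mul_le_mul_of_nonneg_left h3 (Nat.cast_nonneg k)
      nlinarith [mul_le_mul_of_nonneg_left h4 (abs_nonneg (c k))]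
    · have := (h 1 (by rw [abs_one]; exact hR)).summable
      simpa using this
  have hval : (∑' k : ℕ, c k * ((k : ℝ) * 1 ^ (k - 1))) = ∑' k : ℕ, (k : ℝ) * c k := by
    apply tsum_congr; intro k; rw [one_pow]; ring
  rw [hval] at key
  apply key.congr_of_eventuallyEq
  have hopen : Set.Ioo (-r) r ∈ nhds (1:ℝ) := isOpen_Ioo.mem_nhds hmem
  filter_upwards [hopen] with t ht
  have habs : |t| < R := lt_trans (abs_lt.2 ⟨ht.1, ht.2⟩) hrR
  exact ((h t habs).tsum_eq).symm

lemma abs_le_supnorm {φ : ℝ → ℝ} {M : ℝ} (hM : ∀ t, |φ t| ≤ M) {s : ℝ} (hs : 0 ≤ s) :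
    |φ s| ≤ supnorm φ := by
  apply le_csSup
  · exact ⟨M, by rintro y ⟨z, hz, rfl⟩; exact hM z⟩
  · exact ⟨s, hs, rfl⟩

lemma supnorm_nonneg {φ : ℝ → ℝ} {M : ℝ} (hM : ∀ t, |φ t| ≤ M) : 0 ≤ supnorm φ :=
  le_trans (abs_nonneg (φ 0)) (abs_le_supnorm hM le_rfl)

lemma taylor_bound {g : ℝ → ℝ} (hg : ContDiff ℝ 2 g) {M x t : ℝ} (hx : 0 ≤ x) (ht : 0 ≤ t)
    (hM : ∀ s, 0 ≤ s → |deriv (deriv g) s| ≤ M) :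
    |g t - g x - deriv g x * (t - x)| ≤ M / 2 * (t - x) ^ 2 := by
  have hg2 : ContDiff ℝ (1 + 1) g := by norm_num only; exact hg
  have hg1 : Differentiable ℝ g := hg.differentiable (by norm_num)
  have hd1 : ContDiff ℝ 1 (deriv g) := (contDiff_succ_iff_deriv.mp hg2).2.2
  have hgd : Differentiable ℝ (deriv g) := hd1.differentiable (by norm_num)
  have hgc : Continuous (deriv (deriv g)) := (contDiff_one_iff_deriv.mp hd1).2
  have step1 : ∀ u v : ℝ, 0 ≤ u → 0 ≤ v → |deriv g u - deriv g v| ≤ M * |u - v| := by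
    intro u v hu hv
    have hftc : ∫ s in v..u, deriv (deriv g) s = deriv g u - deriv g v :=
      intervalIntegral.integral_deriv_eq_sub (fun s _ => hgd s) (hgc.intervalIntegrable v u)
    rw [← hftc]
    have := intervalIntegral.norm_integral_le_of_norm_le_const (C := M) (a := v) (b := u)
      (f := fun s => deriv (deriv g) s) ?_
    · simpa [Real.norm_eq_abs] using this
    · intro s hs
      have h0s : 0 ≤ s := le_trans (le_min hv hu) hs.1.le
      simpa [Real.norm_eq_abs] using hM s h0s
  set φ : ℝ → ℝ := fun u => g u - g x - deriv g x * (u - x) with hφdef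
  have hφd : ∀ u : ℝ, HasDerivAt φ (deriv g u - deriv g x) u := by
    intro u
    have h1 : HasDerivAt (fun u : ℝ => deriv g x * (u - x)) (deriv g x) u := by
      simpa using ((hasDerivAt_id u).sub_const x).const_mul (deriv g x)
    exact (((hg1 u).hasDerivAt).sub_const (g x)).sub h1
  have hcont : Continuous fun u => deriv g u - deriv g x :=
    hgd.continuous.sub continuous_const
  have hftc2 : ∫ u in x..t, (deriv g u - deriv g x) = φ t - φ x :=
    intervalIntegral.integral_eq_sub_of_hasDerivAt (fun u _ => hφd u)
      (hcont.intervalIntegrable x t)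
  have hφx : φ x = 0 := by simp [hφdef]
  have hgoal : |φ t| ≤ M / 2 * (t - x) ^ 2 := by
    rw [show φ t = ∫ u in x..t, (deriv g u - deriv g x) by rw [hftc2, hφx, sub_zero]]
    rcases le_or_gt x t with hxt | hxt
    · calc |∫ u in x..t, (deriv g u - deriv g x)| ≤ ∫ u in x..t, |deriv g u - deriv g x| := by
            simpa [Real.norm_eq_abs] using
              intervalIntegral.norm_integral_le_integral_norm (f := fun u => deriv g u - deriv g x)
                (a := x) (b := t) (μ := MeasureTheory.volume) hxt
      _ ≤ ∫ u in x..t, M * (u - x) := by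
            apply intervalIntegral.integral_mono_on hxt
              (hcont.abs.intervalIntegrable x t)
              ((continuous_const.mul (continuous_id.sub continuous_const)).intervalIntegrable x t)
            intro u hu
            have h0u : 0 ≤ u := le_trans hx hu.1
            have := step1 u x h0u hx
            rwa [abs_of_nonneg (by linarith [hu.1] : (0:ℝ) ≤ u - x)] at this
      _ = M / 2 * (t - x) ^ 2 := by
            rw [intervalIntegral.integral_const_mul,
              intervalIntegral.integral_comp_sub_right (fun u => u) x, integral_id]
            ring
    · rw [intervalIntegral.integral_symm, abs_neg]
      calc |∫ u in t..x, (deriv g u - deriv g x)| ≤ ∫ u in t..x, |deriv g u - deriv g x| := by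
            simpa [Real.norm_eq_abs] using
              intervalIntegral.norm_integral_le_integral_norm (f := fun u => deriv g u - deriv g x)
                (a := t) (b := x) (μ := MeasureTheory.volume) hxt.le
      _ ≤ ∫ u in t..x, M * (x - u) := by
            apply intervalIntegral.integral_mono_on hxt.le
              (hcont.abs.intervalIntegrable t x)
              ((continuous_const.mul (continuous_const.sub continuous_id)).intervalIntegrable t x)
            intro u hu
            have h0u : 0 ≤ u := le_trans ht hu.1
            have := step1 u x h0u hx
            rwa [abs_of_nonpos (by linarith [hu.2] : u - x ≤ 0), neg_sub] at this
      _ = M / 2 * (t - x) ^ 2 := by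
            rw [intervalIntegral.integral_const_mul,
              intervalIntegral.integral_comp_sub_left (fun u => u) x, integral_id]
            ring
  exact hgoal

set_option maxHeartbeats 2000000 in
theorem sheffer_peetre_estimate
    (R : ℝ) (hR : 1 < R)
    (A H : ℝ → ℝ) (a h : ℕ → ℝ)
    (ha0 : a 0 ≠ 0) (hh1 : h 1 ≠ 0) (hh0 : h 0 = 0)
    (hAser : ∀ t : ℝ, |t| < R → HasSum (fun k : ℕ => a k * t ^ k) (A t))
    (hHser : ∀ t : ℝ, |t| < R → HasSum (fun k : ℕ => h k * t ^ k) (H t))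
    (p : ℕ → ℝ → ℝ)
    (hgen : ∀ x t : ℝ, |t| < R →
      HasSum (fun k : ℕ => p k x * t ^ k) (A t * Real.exp (x * H t)))
    (hp : ∀ (k : ℕ) (x : ℝ), 0 ≤ x → 0 ≤ p k x)
    (hA1 : A 1 ≠ 0) (hH1 : deriv H 1 = 1)
    (b : ℕ → ℝ) (hbpos : ∀ n, 0 < b n)
    (hbtop : Tendsto b atTop atTop)
    (hbn : Tendsto (fun n : ℕ => b n / (n : ℝ)) atTop (nhds 0))
    (hA'0 : deriv A 1 = 0)
    (f : ℝ → ℝ) (hfc : UniformContinuous f) (hfb : ∃ M, ∀ t : ℝ, |f t| ≤ M)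
    (n : ℕ) (hn : 1 ≤ n) (x : ℝ) (hx : 0 ≤ x) :
    |szaszSheffer A H p b n f x - f x|
      ≤ 2 * peetreK f ((1 / 4) * szaszSheffer A H p b n (fun t => (t - x) ^ 2) x) := by
  obtain ⟨Mf, hMf⟩ := hfb
  have hbn0 : (0:ℝ) < b n := hbpos n
  have hn0 : (0:ℝ) < n := by exact_mod_cast hn
  set y : ℝ := (n : ℝ) / b n * x with hydef
  have hy : 0 ≤ y := mul_nonneg (by positivity) hx
  set c : ℝ := b n / n with hcdef
  have hc : 0 < c := by positivity
  have hcy : c * y = x := by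
    rw [hydef, hcdef]; field_simp
  set P : ℕ → ℝ := fun k => p k y with hPdef
  have hP : ∀ k, 0 ≤ P k := fun k => hp k y hy
  set E : ℝ := A 1 * Real.exp (y * H 1) with hEdef
  have h1R : |(1:ℝ)| < R := by rw [abs_one]; exact hR
  have hsum0 : HasSum P E := by simpa using hgen y 1 h1R
  have hfx : (∑' k : ℕ, P k) = E := hsum0.tsum_eq
  have hE : 0 < E := by
    have h1 : 0 ≤ E := hfx ▸ tsum_nonneg hP
    have h2 : E ≠ 0 := mul_ne_zero hA1 (Real.exp_ne_zero _)
    exact lt_of_le_of_ne h1 (Ne.symm h2)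
  -- rewrite szaszSheffer
  have hszasz : ∀ φ : ℝ → ℝ, szaszSheffer A H p b n φ x
      = (∑' k : ℕ, P k * φ ((k:ℝ) * c)) / E := by
    intro φ
    have hpre : Real.exp (-((n:ℝ)/b n) * x * H 1) / A 1 = 1 / E := by
      rw [hEdef, show -((n:ℝ)/b n) * x * H 1 = -(y * H 1) by rw [hydef]; ring,
        Real.exp_neg]
      field_simp
    simp only [szaszSheffer, hpre]
    rw [one_div, inv_mul_eq_div]
    congr 1
    apply tsum_congr
    intro k
    have harg : ((k:ℝ)/n) * b n = (k:ℝ) * c := by rw [hcdef]; ring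
    rw [harg]
  -- summabilities
  have hs0 : Summable P := hsum0.summable
  set r' : ℝ := (1 + R) / 2 with hr'def
  have hr'1 : 1 < r' := by rw [hr'def]; linarith
  have hSr' : HasSum (fun k : ℕ => P k * r' ^ k) (A r' * Real.exp (y * H r')) :=
    hgen y r' (by rw [abs_of_nonneg (by linarith)]; rw [hr'def]; linarith)
  have hs2 : Summable (fun k : ℕ => (k:ℝ)^2 * P k) := by
    have := summable_weight (zero_le_one) hr'1 hSr' 2
    apply this.congr
    intro k
    simp [abs_of_nonneg (hP k)]
  obtain ⟨hs1, hD1⟩ := hasDerivAt_of_series hR (c := P)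
    (F := fun t => A t * Real.exp (y * H t)) (fun t ht => hgen y t ht)
  -- moment 1
  have hDA := (hasDerivAt_of_series hR hAser).2
  have hDH := (hasDerivAt_of_series hR hHser).2
  have hDA0 : HasDerivAt A 0 1 := by
    have hd := hDA.deriv; rw [hA'0] at hd; rwa [← hd] at hDA
  have hDH1 : HasDerivAt H 1 1 := by
    have hd := hDH.deriv; rw [hH1] at hd; rwa [← hd] at hDH
  have hDclosed : HasDerivAt (fun t => A t * Real.exp (y * H t))
      (0 * Real.exp (y * H 1) + A 1 * (Real.exp (y * H 1) * (y * 1))) 1 :=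
    hDA0.mul ((hDH1.const_mul y).exp)
  have hmom1 : (∑' k : ℕ, (k:ℝ) * P k) = y * E := by
    have := hD1.unique hDclosed
    rw [this, hEdef]; ring
  have hh1sum : HasSum (fun k : ℕ => (k:ℝ) * P k) (y * E) := hmom1 ▸ hs1.hasSum
  -- linear moment vanishes
  have slin : Summable (fun k : ℕ => P k * ((k:ℝ)*c - x)) :=
    ((hs1.mul_left c).sub (hs0.mul_left x)).congr fun k => by ring
  have hlinsum : HasSum (fun k : ℕ => P k * ((k:ℝ)*c - x)) 0 := by
    have hval : c * (y * E) - x * E = 0 := by rw [← hcy]; ring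
    have hcomb := (hh1sum.mul_left c).sub (hsum0.mul_left x)
    rw [hval] at hcomb
    have heqf : (fun k : ℕ => c * ((k:ℝ) * P k) - x * P k)
        = fun k : ℕ => P k * ((k:ℝ)*c - x) := funext fun k => by ring
    rwa [heqf] at hcomb
  -- quadratic moment
  have hQsummable : Summable (fun k : ℕ => P k * ((k:ℝ)*c - x)^2) :=
    (((hs2.mul_left (c^2)).sub (hs1.mul_left (2*c*x))).add (hs0.mul_left (x^2))).congr
      fun k => by ring
  set Q : ℝ := ∑' k : ℕ, P k * ((k:ℝ)*c - x)^2 with hQdef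
  have hQ0 : 0 ≤ Q := tsum_nonneg fun k => mul_nonneg (hP k) (sq_nonneg _)
  have hT2 : szaszSheffer A H p b n (fun t => (t - x)^2) x = Q / E := by
    rw [hszasz]
  rw [hT2]
  have hQE : 0 ≤ Q / E := div_nonneg hQ0 hE.le
  have hkc : ∀ k : ℕ, 0 ≤ (k:ℝ) * c := fun k => mul_nonneg (Nat.cast_nonneg k) hc.le
  have hsummb : ∀ (φ : ℝ → ℝ) (Mφ : ℝ), (∀ t, |φ t| ≤ Mφ) →
      Summable (fun k : ℕ => P k * φ ((k:ℝ)*c)) := by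
    intro φ Mφ hMφ
    apply Summable.of_norm_bounded (hs0.mul_left Mφ)
    intro k
    rw [Real.norm_eq_abs, abs_mul, abs_of_nonneg (hP k)]
    calc P k * |φ ((k:ℝ)*c)| ≤ P k * Mφ := mul_le_mul_of_nonneg_left (hMφ _) (hP k)
      _ = Mφ * P k := mul_comm _ _
  have sF : Summable (fun k : ℕ => P k * f ((k:ℝ)*c)) := hsummb f Mf hMf
  have habs_bound : ∀ (w : ℕ → ℝ) (Cw : ℝ), Summable w → (∀ k, |w k| ≤ Cw * P k) →
      |∑' k : ℕ, w k| ≤ Cw * E := by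
    intro w Cw hsw hbw
    have hsabs : Summable (fun k : ℕ => |w k|) := hsw.abs
    calc |∑' k : ℕ, w k| ≤ ∑' k : ℕ, |w k| := by
          simpa only [Real.norm_eq_abs] using
            norm_tsum_le_tsum_norm (f := w) (by simpa only [Real.norm_eq_abs] using hsabs)
      _ ≤ ∑' k : ℕ, Cw * P k := Summable.tsum_le_tsum hbw hsabs (hs0.mul_left Cw)
      _ = Cw * E := by rw [tsum_mul_left, hfx]
  -- reduce to K-functional bound
  suffices hsuf : |szaszSheffer A H p b n f x - f x| / 2 ≤ peetreK f (1/4 * (Q/E)) by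
    linarith
  rw [peetreK]
  apply le_csInf
  · exact ⟨_, ⟨fun _ => 0, contDiff_const, ⟨0, fun t => by simp⟩, ⟨0, fun t => by simp⟩,
      ⟨0, fun t => by simp⟩, rfl⟩⟩
  rintro w ⟨g, hgC, ⟨M0, hM0⟩, ⟨M1, hM1⟩, ⟨M2, hM2⟩, rfl⟩
  have hMfg : ∀ t, |f t - g t| ≤ Mf + M0 := fun t =>
    (abs_sub _ _).trans (add_le_add (hMf t) (hM0 t))
  set Nf : ℝ := supnorm (fun t => f t - g t) with hNfdef
  set N0 : ℝ := supnorm g with hN0def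
  set N1 : ℝ := supnorm (deriv g) with hN1def
  set N2 : ℝ := supnorm (deriv (deriv g)) with hN2def
  have hNf0 : 0 ≤ Nf := supnorm_nonneg hMfg
  have hN00 : 0 ≤ N0 := supnorm_nonneg hM0
  have hN10 : 0 ≤ N1 := supnorm_nonneg hM1
  have hN20 : 0 ≤ N2 := supnorm_nonneg hM2
  have sG : Summable (fun k : ℕ => P k * g ((k:ℝ)*c)) := hsummb g M0 hM0
  have sFG : Summable (fun k : ℕ => P k * (f ((k:ℝ)*c) - g ((k:ℝ)*c))) := by
    have := hsummb (fun t => f t - g t) (Mf + M0) hMfg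
    exact this
  have srem : Summable (fun k : ℕ =>
      P k * (g ((k:ℝ)*c) - g x - deriv g x * ((k:ℝ)*c - x))) := by
    have h5 : Summable (fun k : ℕ => P k * g ((k:ℝ)*c) - g x * P k
        - deriv g x * (P k * ((k:ℝ)*c - x))) :=
      (sG.sub (hs0.mul_left (g x))).sub (slin.mul_left (deriv g x))
    exact h5.congr fun k => by ring
  set S1 : ℝ := ∑' k : ℕ, P k * (f ((k:ℝ)*c) - g ((k:ℝ)*c)) with hS1def
  set S3 : ℝ := ∑' k : ℕ, P k * (g ((k:ℝ)*c) - g x - deriv g x * ((k:ℝ)*c - x)) with hS3def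
  -- decomposition
  have hsplit : (∑' k : ℕ, P k * (f ((k:ℝ)*c) - f x))
      = S1 - E * (f x - g x) + (S3 + deriv g x * 0) := by
    have h1 := sFG.hasSum
    have h2 := hsum0.mul_right (f x - g x)
    have h3 := srem.hasSum
    have h4 := hlinsum.mul_left (deriv g x)
    have hcomb := (h1.sub h2).add (h3.add h4)
    have heqf : (fun k : ℕ => (P k * (f ((k:ℝ)*c) - g ((k:ℝ)*c)) - P k * (f x - g x))
        + (P k * (g ((k:ℝ)*c) - g x - deriv g x * ((k:ℝ)*c - x))
          + deriv g x * (P k * ((k:ℝ)*c - x))))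
        = fun k : ℕ => P k * (f ((k:ℝ)*c) - f x) := funext fun k => by ring
    rw [heqf] at hcomb
    exact hcomb.tsum_eq
  have hSf_decomp : szaszSheffer A H p b n f x - f x
      = (S1 - E * (f x - g x) + (S3 + deriv g x * 0)) / E := by
    rw [← hsplit, hszasz f]
    have hsub : (∑' k : ℕ, P k * (f ((k:ℝ)*c) - f x))
        = (∑' k : ℕ, P k * f ((k:ℝ)*c)) - E * f x := by
      have hcomb := sF.hasSum.sub (hsum0.mul_right (f x))
      have heqf : (fun k : ℕ => P k * f ((k:ℝ)*c) - P k * f x)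
          = fun k : ℕ => P k * (f ((k:ℝ)*c) - f x) := funext fun k => by ring
      rw [heqf] at hcomb
      exact hcomb.tsum_eq
    rw [hsub]
    field_simp
    simp only [mul_comm]
  -- bounds
  have hS1b : |S1| ≤ Nf * E := by
    apply habs_bound _ _ sFG
    intro k
    rw [abs_mul, abs_of_nonneg (hP k)]
    calc P k * |f ((k:ℝ)*c) - g ((k:ℝ)*c)| ≤ P k * Nf :=
          mul_le_mul_of_nonneg_left (abs_le_supnorm hMfg (hkc k)) (hP k)
      _ = Nf * P k := mul_comm _ _
  have hS2b : |E * (f x - g x)| ≤ E * Nf := by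
    rw [abs_mul, abs_of_pos hE]
    exact mul_le_mul_of_nonneg_left (abs_le_supnorm hMfg hx) hE.le
  have hS3b : |S3| ≤ N2/2 * Q := by
    have hrem : ∀ k : ℕ, |g ((k:ℝ)*c) - g x - deriv g x * ((k:ℝ)*c - x)|
        ≤ N2/2 * ((k:ℝ)*c - x)^2 := fun k =>
      taylor_bound hgC hx (hkc k) (fun s hs => abs_le_supnorm hM2 hs)
    calc |S3| ≤ ∑' k : ℕ, |P k * (g ((k:ℝ)*c) - g x - deriv g x * ((k:ℝ)*c - x))| := by
          simpa only [Real.norm_eq_abs] using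
            norm_tsum_le_tsum_norm (f := fun k : ℕ =>
              P k * (g ((k:ℝ)*c) - g x - deriv g x * ((k:ℝ)*c - x)))
              (by simpa only [Real.norm_eq_abs] using srem.abs)
      _ ≤ ∑' k : ℕ, N2/2 * (P k * ((k:ℝ)*c - x)^2) := by
          apply Summable.tsum_le_tsum _ srem.abs (hQsummable.mul_left (N2/2))
          intro k
          rw [abs_mul, abs_of_nonneg (hP k)]
          calc P k * |g ((k:ℝ)*c) - g x - deriv g x * ((k:ℝ)*c - x)|
              ≤ P k * (N2/2 * ((k:ℝ)*c - x)^2) :=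
                mul_le_mul_of_nonneg_left (hrem k) (hP k)
            _ = N2/2 * (P k * ((k:ℝ)*c - x)^2) := by ring
      _ = N2/2 * Q := by rw [tsum_mul_left]
  -- combine
  have htot : |szaszSheffer A H p b n f x - f x| ≤ 2*Nf + N2/2 * (Q/E) := by
    rw [hSf_decomp, abs_div, abs_of_pos hE]
    have hnum : |S1 - E * (f x - g x) + (S3 + deriv g x * 0)|
        ≤ Nf * E + E * Nf + N2/2 * Q := by
      calc |S1 - E * (f x - g x) + (S3 + deriv g x * 0)|
          ≤ |S1 - E * (f x - g x)| + |S3 + deriv g x * 0| := abs_add_le _ _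
        _ ≤ (|S1| + |E * (f x - g x)|) + |S3| := by
            rw [mul_zero, add_zero]; exact add_le_add (abs_sub _ _) le_rfl
        _ ≤ Nf * E + E * Nf + N2/2 * Q := by
            linarith [hS1b, hS2b, hS3b]
    calc |S1 - E * (f x - g x) + (S3 + deriv g x * 0)| / E
        ≤ (Nf * E + E * Nf + N2/2 * Q) / E := by
          apply div_le_div_of_nonneg_right hnum hE.le
      _ = 2*Nf + N2/2 * (Q/E) := by field_simp; ring
  have hprod : 0 ≤ (Q/E) * (N0 + N1) := mul_nonneg hQE (by linarith)
  nlinarith [htot, hprod, hQE, hN20]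
end
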